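/- arXiv:1711.09179 — 6 statements merged into one kernel-verified Lean document; each statement's English description precedes it below -/
import Mathlib

section
/- Let X_1,…,X_d (d ≥ 2, X_i ∈ ℝ^{p_i}) satisfy E|X_i| < ∞ and Assumption 1. For any vectors a_i ∈ ℝ^{p_i}, scalars c_i ∈ ℝ, and orthogonal linear maps A_i : ℝ^{p_i} → ℝ^{p_i}, one has dCov²(a_1 + c_1A_1X_1, …, a_d + c_dA_dX_d) = (∏_{i=1}^d |c_i|) · dCov²(X_1,…,X_d). Moreover, for every permutation σ of {1,…,d}, dCov²(X_{σ(1)},…,X_{σ(d)}) = dCov²(X_1,…,X_d). -/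
open MeasureTheory ProbabilityTheory Filter Finset
open scoped BigOperators RealInnerProductSpace Classical

noncomputable section

/-- `U_X(x,x') = E‖x − X‖ + E‖X − x'‖ − ‖x − x'‖ − E‖X − X'‖`. -/
def Ufn {Ω E : Type*} [MeasurableSpace Ω] [NormedAddCommGroup E]
    (μ : Measure Ω) (X X' : Ω → E) (x x' : E) : ℝ :=
  (∫ ω, ‖x - X ω‖ ∂μ) + (∫ ω, ‖X ω - x'‖ ∂μ) - ‖x - x'‖ - ∫ ω, ‖X ω - X' ω‖ ∂μ

/-- squared distance covariance of the subcollection indexed by `S`. -/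
def dCov2sub {Ω : Type*} [MeasurableSpace Ω] {d : ℕ} {E : Fin d → Type*}
    [∀ i, NormedAddCommGroup (E i)] (μ : Measure Ω)
    (X X' : (i : Fin d) → Ω → E i) (S : Finset (Fin d)) : ℝ :=
  ∫ ω, ∏ i ∈ S, Ufn μ (X i) (X' i) (X i ω) (X' i ω) ∂μ

/-- squared d-th order distance covariance. -/
def dCov2 {Ω : Type*} [MeasurableSpace Ω] {d : ℕ} {E : Fin d → Type*}
    [∀ i, NormedAddCommGroup (E i)] (μ : Measure Ω)
    (X X' : (i : Fin d) → Ω → E i) : ℝ :=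
  dCov2sub μ X X' Finset.univ

/-- squared joint distance covariance with parameter `c`. -/
def JdCov2 {Ω : Type*} [MeasurableSpace Ω] {d : ℕ} {E : Fin d → Type*}
    [∀ i, NormedAddCommGroup (E i)] (μ : Measure Ω)
    (X X' : (i : Fin d) → Ω → E i) (c : ℝ) : ℝ :=
  ∑ S ∈ Finset.univ.filter (fun S : Finset (Fin d) => 2 ≤ S.card),
    c ^ (d - S.card) * dCov2sub μ X X' S

/-- squared joint distance covariance with general coefficients `C`. -/
def JdCov2C {Ω : Type*} [MeasurableSpace Ω] {d : ℕ} {E : Fin d → Type*}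
    [∀ i, NormedAddCommGroup (E i)] (μ : Measure Ω)
    (X X' : (i : Fin d) → Ω → E i) (C : ℕ → ℝ) : ℝ :=
  ∑ S ∈ Finset.univ.filter (fun S : Finset (Fin d) => 2 ≤ S.card),
    C S.card * dCov2sub μ X X' S

/-- `(X'_1,…,X'_d)` is an independent copy of `(X_1,…,X_d)`. -/
def IsIndepCopy {Ω : Type*} [MeasurableSpace Ω] {d : ℕ} {E : Fin d → Type*}
    [∀ i, MeasurableSpace (E i)] (μ : Measure Ω)
    (X X' : (i : Fin d) → Ω → E i) : Prop :=
  IndepFun (fun ω i => X i ω) (fun ω i => X' i ω) μ ∧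
  IdentDistrib (fun ω i => X i ω) (fun ω i => X' i ω) μ μ

/-- Assumption 1. -/
def Assumption1 {Ω : Type*} [MeasurableSpace Ω] {d : ℕ} {E : Fin d → Type*}
    [∀ i, NormedAddCommGroup (E i)] (μ : Measure Ω)
    (X : (i : Fin d) → Ω → E i) : Prop :=
  ∀ S : Finset (Fin d), 2 ≤ S.card →
    ∃ S₁ S₂ : Finset (Fin d), S₁ ∪ S₂ = S ∧ Disjoint S₁ S₂ ∧
      Integrable (fun ω => ∏ i ∈ S₁, ‖X i ω‖) μ ∧
      Integrable (fun ω => ∏ i ∈ S₂, ‖X i ω‖) μ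

/-- characteristic function of a Euclidean random vector. -/
def charFn {Ω : Type*} [MeasurableSpace Ω] {p : ℕ} (μ : Measure Ω)
    (X : Ω → EuclideanSpace ℝ (Fin p)) (t : EuclideanSpace ℝ (Fin p)) : ℂ :=
  ∫ ω, Complex.exp (Complex.I * ((⟪t, X ω⟫ : ℝ) : ℂ)) ∂μ

/-- the weight `w_p(t) = (c_p ‖t‖^{1+p})⁻¹`, `c_p = π^{(1+p)/2}/Γ((1+p)/2)`. -/
def wgt (p : ℕ) {E : Type*} [NormedAddCommGroup E] (t : E) : ℝ :=
  (Real.pi ^ ((1 + (p : ℝ)) / 2) / Real.Gamma ((1 + (p : ℝ)) / 2) * ‖t‖ ^ (1 + p))⁻¹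

lemma norm_aff {E : Type*} [NormedAddCommGroup E] [NormedSpace ℝ E]
    (a : E) (c : ℝ) (A : E ≃ₗᵢ[ℝ] E) (x y : E) :
    ‖(a + c • A x) - (a + c • A y)‖ = |c| * ‖x - y‖ := by
  rw [add_sub_add_left_eq_sub, ← smul_sub, ← LinearIsometryEquiv.map_sub, norm_smul,
    A.norm_map, Real.norm_eq_abs]

lemma Ufn_aff {Ω E : Type*} [MeasurableSpace Ω] [NormedAddCommGroup E]
    [NormedSpace ℝ E] (μ : Measure Ω) (Y Y' : Ω → E)
    (a : E) (c : ℝ) (A : E ≃ₗᵢ[ℝ] E) (x x' : E) :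
    Ufn μ (fun ω => a + c • A (Y ω)) (fun ω => a + c • A (Y' ω))
      (a + c • A x) (a + c • A x') = |c| * Ufn μ Y Y' x x' := by
  unfold Ufn
  simp only [norm_aff]
  rw [MeasureTheory.integral_const_mul _ _, MeasureTheory.integral_const_mul _ _, MeasureTheory.integral_const_mul _ _]
  ring

/-- Proposition 2.1(1). Invariance of `dCov²` under translation, scaling,
orthogonal transformation, and permutation. -/
theorem stmt2 {Ω : Type*} [MeasurableSpace Ω] (μ : Measure Ω) [IsProbabilityMeasure μ]
    {d : ℕ} (hd : 2 ≤ d) {p : Fin d → ℕ}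
    (X X' : (i : Fin d) → Ω → EuclideanSpace ℝ (Fin (p i)))
    (hm : ∀ i, Measurable (X i)) (hint : ∀ i, Integrable (X i) μ)
    (hA : Assumption1 μ X) (hcopy : IsIndepCopy μ X X')
    (a : (i : Fin d) → EuclideanSpace ℝ (Fin (p i))) (c : Fin d → ℝ)
    (A : (i : Fin d) → EuclideanSpace ℝ (Fin (p i)) ≃ₗᵢ[ℝ] EuclideanSpace ℝ (Fin (p i)))
    (σ : Equiv.Perm (Fin d)) :
    dCov2 μ (fun i ω => a i + c i • (A i) (X i ω)) (fun i ω => a i + c i • (A i) (X' i ω))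
        = (∏ i, |c i|) * dCov2 μ X X' ∧
    dCov2 μ (fun i ω => X (σ i) ω) (fun i ω => X' (σ i) ω) = dCov2 μ X X' := by
  constructor
  · unfold dCov2 dCov2sub
    have h : ∀ ω, (∏ i : Fin d, Ufn μ (fun ω => a i + c i • (A i) (X i ω))
        (fun ω => a i + c i • (A i) (X' i ω))
        (a i + c i • (A i) (X i ω)) (a i + c i • (A i) (X' i ω)))
        = (∏ i, |c i|) * ∏ i : Fin d, Ufn μ (X i) (X' i) (X i ω) (X' i ω) := by
      intro ω
      rw [← Finset.prod_mul_distrib]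
      exact Finset.prod_congr rfl fun i _ => Ufn_aff μ (X i) (X' i) (a i) (c i) (A i) _ _
    simp_rw [h]
    rw [MeasureTheory.integral_const_mul _ _]
  · unfold dCov2 dCov2sub
    have h : ∀ ω, (∏ i : Fin d, Ufn μ (X (σ i)) (X' (σ i)) (X (σ i) ω) (X' (σ i) ω))
        = ∏ i : Fin d, Ufn μ (X i) (X' i) (X i ω) (X' i ω) := fun ω =>
      Equiv.prod_comp σ (fun i => Ufn μ (X i) (X' i) (X i ω) (X' i ω))
    simp_rw [h]
end
end

section
/- Let X_1,…,X_d (d ≥ 2, X_i ∈ ℝ^{p_i}) satisfy E|X_i| < ∞ and Assumption 1, and let (X_1',…,X_d') be an independent copy of (X_1,…,X_d). Then for every c ≥ 0, JdCov²(X_1,…,X_d; c) = E[∏_{i=1}^d (U_{X_i}(X_i, X_i') + c)] − c^d. In particular, for d = 2 and any c ≥ 0, JdCov²(X_1,X_2;c) = E[U_{X_1}(X_1,X_1')·U_{X_2}(X_2,X_2')] = dCov²(X_1,X_2). -/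
open MeasureTheory ProbabilityTheory Filter Finset
open scoped BigOperators RealInnerProductSpace Classical

noncomputable section

section Stmt5Aux

variable {Ω : Type*} [MeasurableSpace Ω] {μ : Measure Ω} [IsProbabilityMeasure μ]
variable {E' : Type*} [NormedAddCommGroup E']

omit [IsProbabilityMeasure μ] in
lemma Ufn_eq (X X' : Ω → E') (x x' : E') :
    Ufn μ X X' x x' = (∫ ω, ‖x - X ω‖ ∂μ) + (∫ ω, ‖x' - X ω‖ ∂μ) - ‖x - x'‖
      - ∫ ω, ‖X ω - X' ω‖ ∂μ := by
  unfold Ufn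
  rw [show (fun ω => ‖X ω - x'‖) = (fun ω => ‖x' - X ω‖) from funext fun ω => norm_sub_rev _ _]

lemma lip_integral_norm (X : Ω → E') (hX : Integrable X μ) :
    LipschitzWith 1 (fun x : E' => ∫ ω, ‖x - X ω‖ ∂μ) := by
  intro x y
  rw [ENNReal.coe_one, one_mul, edist_dist, edist_dist]
  apply ENNReal.ofReal_le_ofReal
  rw [Real.dist_eq]
  have h1 : Integrable (fun ω => ‖x - X ω‖) μ := ((integrable_const x).sub hX).norm
  have h2 : Integrable (fun ω => ‖y - X ω‖) μ := ((integrable_const y).sub hX).norm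
  rw [← integral_sub h1 h2]
  calc |∫ ω, (‖x - X ω‖ - ‖y - X ω‖) ∂μ|
      ≤ ∫ ω, |‖x - X ω‖ - ‖y - X ω‖| ∂μ := by
        simpa [Real.norm_eq_abs] using norm_integral_le_integral_norm
          (fun ω => ‖x - X ω‖ - ‖y - X ω‖) (μ := μ)
    _ ≤ ∫ _ω, ‖x - y‖ ∂μ := by
        refine integral_mono (h1.sub h2).abs (integrable_const _) fun ω => ?_
        simpa [sub_sub_sub_cancel_right] using abs_norm_sub_norm_le (x - X ω) (y - X ω)
    _ = ‖x - y‖ := by simp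
    _ = dist x y := (dist_eq_norm x y).symm

lemma Ufn_abs_le (X X' : Ω → E') (hX : Integrable X μ) (hX' : Integrable X' μ) (x x' : E') :
    |Ufn μ X X' x x'| ≤
      2 * (min ‖x‖ ‖x'‖ + ((∫ ω, ‖X ω‖ ∂μ) + ∫ ω, ‖X' ω‖ ∂μ)) := by
  set M : ℝ := ∫ ω, ‖X ω‖ ∂μ with hM
  set K : ℝ := M + ∫ ω, ‖X' ω‖ ∂μ with hK
  have hintc : ∀ z : E', Integrable (fun ω => ‖z - X ω‖) μ :=
    fun z => ((integrable_const z).sub hX).norm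
  have hM0 : (0:ℝ) ≤ M := integral_nonneg fun ω => norm_nonneg _
  have hM'0 : (0:ℝ) ≤ ∫ ω, ‖X' ω‖ ∂μ := integral_nonneg fun ω => norm_nonneg _
  have hK0 : (0:ℝ) ≤ K := by positivity
  set a : E' → ℝ := fun z => ∫ ω, ‖z - X ω‖ ∂μ with ha
  have hD0 : (0:ℝ) ≤ ∫ ω, ‖X ω - X' ω‖ ∂μ := integral_nonneg fun ω => norm_nonneg _
  have hDK : (∫ ω, ‖X ω - X' ω‖ ∂μ) ≤ K := by
    rw [hK, hM, ← integral_add hX.norm hX'.norm]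
    exact integral_mono (hX.sub hX').norm (hX.norm.add hX'.norm) fun ω => norm_sub_le _ _
  have ha_le : ∀ z : E', a z ≤ ‖z‖ + M := by
    intro z
    have : (∫ ω, (‖z‖ + ‖X ω‖) ∂μ) = ‖z‖ + M := by
      rw [integral_add (integrable_const _) hX.norm]; simp [hM]
    rw [← this]
    exact integral_mono (hintc z) ((integrable_const _).add hX.norm) fun ω => norm_sub_le _ _
  have ha0 : ∀ z : E', 0 ≤ a z := fun z => integral_nonneg fun ω => norm_nonneg _
  have htri1 : a x' ≤ ‖x - x'‖ + a x := by
    have : (∫ ω, (‖x - x'‖ + ‖x - X ω‖) ∂μ) = ‖x - x'‖ + a x := by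
      rw [integral_add (integrable_const _) (hintc x)]; simp [ha]
    rw [← this]
    refine integral_mono (hintc x') ((integrable_const _).add (hintc x)) fun ω => ?_
    calc ‖x' - X ω‖ = ‖(x' - x) + (x - X ω)‖ := by abel_nf
      _ ≤ ‖x' - x‖ + ‖x - X ω‖ := norm_add_le _ _
      _ = ‖x - x'‖ + ‖x - X ω‖ := by rw [norm_sub_rev]
  have htri2 : a x ≤ ‖x - x'‖ + a x' := by
    have : (∫ ω, (‖x - x'‖ + ‖x' - X ω‖) ∂μ) = ‖x - x'‖ + a x' := by
      rw [integral_add (integrable_const _) (hintc x')]; simp [ha]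
    rw [← this]
    refine integral_mono (hintc x) ((integrable_const _).add (hintc x')) fun ω => ?_
    calc ‖x - X ω‖ = ‖(x - x') + (x' - X ω)‖ := by abel_nf
      _ ≤ ‖x - x'‖ + ‖x' - X ω‖ := norm_add_le _ _
  have hlow : ‖x - x'‖ ≤ a x + a x' := by
    have : (∫ _ω, ‖x - x'‖ ∂μ) = ‖x - x'‖ := by simp
    rw [← this, ← integral_add (hintc x) (hintc x')]
    refine integral_mono (integrable_const _) ((hintc x).add (hintc x')) fun ω => ?_
    calc ‖x - x'‖ = ‖(x - X ω) - (x' - X ω)‖ := by abel_nf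
      _ ≤ ‖x - X ω‖ + ‖x' - X ω‖ := norm_sub_le _ _
  rw [Ufn_eq]
  rw [abs_le]
  constructor
  · have h : -(2 * (min ‖x‖ ‖x'‖ + K)) ≤ -(∫ ω, ‖X ω - X' ω‖ ∂μ) := by
      have hmin0 : (0:ℝ) ≤ min ‖x‖ ‖x'‖ := le_min (norm_nonneg _) (norm_nonneg _)
      nlinarith [hDK]
    refine le_trans h ?_
    show _ ≤ a x + a x' - ‖x - x'‖ - ∫ ω, ‖X ω - X' ω‖ ∂μ
    linarith [hlow]
  · show a x + a x' - ‖x - x'‖ - (∫ ω, ‖X ω - X' ω‖ ∂μ) ≤ _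
    rcases min_cases ‖x‖ ‖x'‖ with ⟨hmin, _⟩ | ⟨hmin, _⟩
    · have h1 : a x + a x' - ‖x - x'‖ ≤ 2 * a x := by linarith [htri1]
      have h2 : a x ≤ ‖x‖ + M := ha_le x
      rw [hmin]
      nlinarith [hD0, hM'0]
    · have h1 : a x + a x' - ‖x - x'‖ ≤ 2 * a x' := by linarith [htri2]
      have h2 : a x' ≤ ‖x'‖ + M := ha_le x'
      rw [hmin]
      nlinarith [hD0, hM'0]

lemma Ufn_integral_zero {q : ℕ} (Y Y' : Ω → EuclideanSpace ℝ (Fin q))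
    (hmY : Measurable Y) (hintY : Integrable Y μ)
    (hindepY : IndepFun Y Y' μ) (hidY : IdentDistrib Y Y' μ μ) :
    ∫ ω, Ufn μ Y Y' (Y ω) (Y' ω) ∂μ = 0 := by
  have hXm' : AEMeasurable Y' μ := hidY.aemeasurable_snd
  have hint' : Integrable Y' μ := hidY.integrable_iff.mp hintY
  set ν : Measure (EuclideanSpace ℝ (Fin q)) := Measure.map Y μ with hν
  have hprob : IsProbabilityMeasure ν := Measure.isProbabilityMeasure_map hmY.aemeasurable
  have hmapX' : Measure.map Y' μ = ν := hidY.map_eq.symm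
  have hpair : Measure.map (fun ω => (Y ω, Y' ω)) μ = ν.prod ν := by
    rw [(indepFun_iff_map_prod_eq_prod_map_map hmY.aemeasurable hXm').mp hindepY, hmapX']
  set a : EuclideanSpace ℝ (Fin q) → ℝ := fun z => ∫ ω, ‖z - Y ω‖ ∂μ with ha
  have hacont : Continuous a := (lip_integral_norm Y hintY).continuous
  have hid_int : Integrable (fun z : EuclideanSpace ℝ (Fin q) => z) ν := by
    rw [hν]
    exact (integrable_map_measure aestronglyMeasurable_id hmY.aemeasurable).mpr hintY
  have hfst : Integrable (fun q : EuclideanSpace ℝ (Fin _) × EuclideanSpace ℝ (Fin _) => q.1)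
      (ν.prod ν) := by
    have hmap : Measure.map Prod.fst (ν.prod ν) = ν := by
      rw [Measure.map_fst_prod]; simp
    exact (integrable_map_measure aestronglyMeasurable_id
      measurable_fst.aemeasurable (μ := ν.prod ν)).mp (by rw [hmap]; exact hid_int)
  have hsnd : Integrable (fun q : EuclideanSpace ℝ (Fin _) × EuclideanSpace ℝ (Fin _) => q.2)
      (ν.prod ν) := by
    have hmap : Measure.map Prod.snd (ν.prod ν) = ν := by
      rw [Measure.map_snd_prod]; simp
    exact (integrable_map_measure aestronglyMeasurable_id
      measurable_snd.aemeasurable (μ := ν.prod ν)).mp (by rw [hmap]; exact hid_int)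
  have hF : Integrable (fun q : EuclideanSpace ℝ (Fin _) × EuclideanSpace ℝ (Fin _) =>
      ‖q.1 - q.2‖) (ν.prod ν) := (hfst.sub hsnd).norm
  have e1 : ∫ ω, a (Y ω) ∂μ = ∫ q, ‖q.1 - q.2‖ ∂(ν.prod ν) := by
    have h1 : ∫ ω, a (Y ω) ∂μ = ∫ x, a x ∂ν :=
      (integral_map hmY.aemeasurable hacont.aestronglyMeasurable).symm
    have h2 : ∀ x : EuclideanSpace ℝ (Fin q), a x = ∫ y, ‖x - y‖ ∂ν := fun x =>
      (integral_map hmY.aemeasurable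
        ((continuous_const.sub continuous_id).norm).aestronglyMeasurable).symm
    rw [h1, integral_prod _ hF]
    exact integral_congr_ae (Eventually.of_forall fun x => h2 x)
  have e2 : ∫ ω, a (Y' ω) ∂μ = ∫ q, ‖q.1 - q.2‖ ∂(ν.prod ν) := by
    have h1 : ∫ ω, a (Y' ω) ∂μ = ∫ y, a y ∂ν := by
      rw [← hmapX']
      exact (integral_map hXm' hacont.aestronglyMeasurable).symm
    have h2 : ∀ y : EuclideanSpace ℝ (Fin q), a y = ∫ x, ‖x - y‖ ∂ν := by
      intro y
      have h3 := (integral_map (μ := μ) hmY.aemeasurable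
        (f := fun x : EuclideanSpace ℝ (Fin q) => ‖x - y‖)
        ((continuous_id.sub continuous_const).norm).aestronglyMeasurable).symm
      simpa [ha, norm_sub_rev] using h3
    rw [h1, integral_prod_symm _ hF]
    exact integral_congr_ae (Eventually.of_forall fun y => h2 y)
  have e3 : ∫ ω, ‖Y ω - Y' ω‖ ∂μ = ∫ q, ‖q.1 - q.2‖ ∂(ν.prod ν) := by
    rw [← hpair]
    exact (integral_map (hmY.aemeasurable.prodMk hXm')
      ((continuous_fst.sub continuous_snd).norm).aestronglyMeasurable).symm
  have hintaX : Integrable (fun ω => a (Y ω)) μ := by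
    refine ((hintY.norm.add (integrable_const (∫ ω, ‖Y ω‖ ∂μ))).mono'
      ((hacont.measurable.comp hmY).aestronglyMeasurable)) ?_
    filter_upwards with ω
    show ‖a (Y ω)‖ ≤ ‖Y ω‖ + ∫ ω', ‖Y ω'‖ ∂μ
    rw [Real.norm_eq_abs, abs_of_nonneg (integral_nonneg fun ω' => norm_nonneg _)]
    have h : (∫ ω', (‖Y ω‖ + ‖Y ω'‖) ∂μ) = ‖Y ω‖ + ∫ ω', ‖Y ω'‖ ∂μ := by
      rw [integral_add (integrable_const _) hintY.norm]; simp
    calc (∫ ω', ‖Y ω - Y ω'‖ ∂μ) ≤ ∫ ω', (‖Y ω‖ + ‖Y ω'‖) ∂μ :=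
          integral_mono ((integrable_const (Y ω)).sub hintY).norm
            ((integrable_const _).add hintY.norm) fun ω' => norm_sub_le _ _
      _ = ‖Y ω‖ + ∫ ω', ‖Y ω'‖ ∂μ := h
  have hintaX' : Integrable (fun ω => a (Y' ω)) μ := by
    refine ((hint'.norm.add (integrable_const (∫ ω, ‖Y ω‖ ∂μ))).mono'
      ((hacont.measurable.comp_aemeasurable hXm').aestronglyMeasurable)) ?_
    filter_upwards with ω
    show ‖a (Y' ω)‖ ≤ ‖Y' ω‖ + ∫ ω', ‖Y ω'‖ ∂μ
    rw [Real.norm_eq_abs, abs_of_nonneg (integral_nonneg fun ω' => norm_nonneg _)]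
    have h : (∫ ω', (‖Y' ω‖ + ‖Y ω'‖) ∂μ) = ‖Y' ω‖ + ∫ ω', ‖Y ω'‖ ∂μ := by
      rw [integral_add (integrable_const _) hintY.norm]; simp
    calc (∫ ω', ‖Y' ω - Y ω'‖ ∂μ) ≤ ∫ ω', (‖Y' ω‖ + ‖Y ω'‖) ∂μ :=
          integral_mono ((integrable_const (Y' ω)).sub hintY).norm
            ((integrable_const _).add hintY.norm) fun ω' => norm_sub_le _ _
      _ = ‖Y' ω‖ + ∫ ω', ‖Y ω'‖ ∂μ := h
  have hintnorm : Integrable (fun ω => ‖Y ω - Y' ω‖) μ := (hintY.sub hint').norm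
  have hrw : (fun ω => Ufn μ Y Y' (Y ω) (Y' ω))
      = fun ω => a (Y ω) + a (Y' ω) - ‖Y ω - Y' ω‖ - ∫ ω', ‖Y ω' - Y' ω'‖ ∂μ :=
    funext fun ω => Ufn_eq Y Y' (Y ω) (Y' ω)
  rw [hrw]
  have h12 : Integrable (fun ω => a (Y ω) + a (Y' ω)) μ := hintaX.add hintaX'
  have h123 : Integrable (fun ω => a (Y ω) + a (Y' ω) - ‖Y ω - Y' ω‖) μ := h12.sub hintnorm
  rw [integral_sub h123 (integrable_const _), integral_sub h12 hintnorm,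
    integral_add hintaX hintaX', integral_const]
  simp only [probReal_univ, one_smul]
  rw [e1, e2, e3]
  ring

lemma min_prod_integrable {d : ℕ} {p : Fin d → ℕ}
    (X X' : (i : Fin d) → Ω → EuclideanSpace ℝ (Fin (p i)))
    (hm : ∀ i, Measurable (X i)) (hint : ∀ i, Integrable (X i) μ)
    (hA : Assumption1 μ X)
    (hIF : IndepFun (fun ω i => X i ω) (fun ω i => X' i ω) μ)
    (hID : IdentDistrib (fun ω i => X i ω) (fun ω i => X' i ω) μ μ)
    (hXm' : ∀ i, AEMeasurable (X' i) μ) (T : Finset (Fin d)) :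
    Integrable (fun ω => ∏ i ∈ T, min ‖X i ω‖ ‖X' i ω‖) μ := by
  have hmeasmin : ∀ i : Fin d, AEMeasurable (fun ω => min ‖X i ω‖ ‖X' i ω‖) μ :=
    fun i => ((hm i).aemeasurable.norm).min ((hXm' i).norm)
  have hsm : AEStronglyMeasurable (fun ω => ∏ i ∈ T, min ‖X i ω‖ ‖X' i ω‖) μ :=
    (Finset.aemeasurable_fun_prod T fun i _ => hmeasmin i).aestronglyMeasurable
  by_cases h2 : 2 ≤ T.card
  · obtain ⟨T₁, T₂, hu, hdisj, hI1, hI2⟩ := hA T h2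
    have hφ : Measurable (fun v : (j : Fin d) → EuclideanSpace ℝ (Fin (p j)) =>
        ∏ i ∈ T₁, ‖v i‖) := Finset.measurable_prod _ fun i _ => (measurable_pi_apply i).norm
    have hψ : Measurable (fun v : (j : Fin d) → EuclideanSpace ℝ (Fin (p j)) =>
        ∏ i ∈ T₂, ‖v i‖) := Finset.measurable_prod _ fun i _ => (measurable_pi_apply i).norm
    have hIF2 : IndepFun (fun ω => ∏ i ∈ T₁, ‖X i ω‖) (fun ω => ∏ i ∈ T₂, ‖X' i ω‖) μ :=
      hIF.comp hφ hψ
    have hI2' : Integrable (fun ω => ∏ i ∈ T₂, ‖X' i ω‖) μ :=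
      ((hID.comp hψ).integrable_iff).mp hI2
    have hprod : Integrable (fun ω => (∏ i ∈ T₁, ‖X i ω‖) * ∏ i ∈ T₂, ‖X' i ω‖) μ :=
      hIF2.integrable_mul hI1 hI2'
    refine hprod.mono' hsm ?_
    filter_upwards with ω
    rw [Real.norm_eq_abs,
      abs_of_nonneg (Finset.prod_nonneg fun i _ => le_min (norm_nonneg _) (norm_nonneg _)),
      ← hu, Finset.prod_union hdisj]
    exact mul_le_mul
      (Finset.prod_le_prod (fun i _ => le_min (norm_nonneg _) (norm_nonneg _))
        (fun i _ => min_le_left _ _))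
      (Finset.prod_le_prod (fun i _ => le_min (norm_nonneg _) (norm_nonneg _))
        (fun i _ => min_le_right _ _))
      (Finset.prod_nonneg fun i _ => le_min (norm_nonneg _) (norm_nonneg _))
      (Finset.prod_nonneg fun i _ => norm_nonneg _)
  · have hcc : T.card = 0 ∨ T.card = 1 := by omega
    rcases hcc with h0 | h1
    · rw [Finset.card_eq_zero.mp h0]
      simpa using integrable_const (1 : ℝ)
    · obtain ⟨i, rfl⟩ := Finset.card_eq_one.mp h1
      simp only [Finset.prod_singleton]
      refine (hint i).norm.mono' ((hmeasmin i).aestronglyMeasurable) ?_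
      filter_upwards with ω
      rw [Real.norm_eq_abs, abs_of_nonneg (le_min (norm_nonneg _) (norm_nonneg _))]
      exact min_le_left _ _

end Stmt5Aux

/-- Proposition 2. For every `c ≥ 0`,
`JdCov²(X₁,…,X_d; c) = E[∏ᵢ (U_{Xᵢ}(Xᵢ,Xᵢ') + c)] − c^d`; in particular for `d = 2`,
`JdCov²(X₁,X₂;c) = E[U₁U₂] = dCov²(X₁,X₂)`. -/
theorem stmt5 {Ω : Type*} [MeasurableSpace Ω] (μ : Measure Ω) [IsProbabilityMeasure μ]
    {d : ℕ} (hd : 2 ≤ d) {p : Fin d → ℕ}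
    (X X' : (i : Fin d) → Ω → EuclideanSpace ℝ (Fin (p i)))
    (hm : ∀ i, Measurable (X i)) (hint : ∀ i, Integrable (X i) μ)
    (hA : Assumption1 μ X) (hcopy : IsIndepCopy μ X X')
    (c : ℝ) (hc : 0 ≤ c) :
    JdCov2 μ X X' c
        = (∫ ω, ∏ i, (Ufn μ (X i) (X' i) (X i ω) (X' i ω) + c) ∂μ) - c ^ d ∧
    (d = 2 → JdCov2 μ X X' c
        = ∫ ω, ∏ i, Ufn μ (X i) (X' i) (X i ω) (X' i ω) ∂μ ∧
      JdCov2 μ X X' c = dCov2 μ X X') := by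
  classical
  have hid : ∀ i, IdentDistrib (X i) (X' i) μ μ := fun i =>
    hcopy.2.comp (measurable_pi_apply i)
  have hindep : ∀ i, IndepFun (X i) (X' i) μ := fun i =>
    hcopy.1.comp (measurable_pi_apply i) (measurable_pi_apply i)
  have hXm' : ∀ i, AEMeasurable (X' i) μ := fun i => (hid i).aemeasurable_snd
  have hint' : ∀ i, Integrable (X' i) μ := fun i => (hid i).integrable_iff.mp (hint i)
  have hK0 : ∀ i, (0:ℝ) ≤ (∫ ω, ‖X i ω‖ ∂μ) + ∫ ω, ‖X' i ω‖ ∂μ := fun i =>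
    add_nonneg (integral_nonneg fun ω => norm_nonneg _)
      (integral_nonneg fun ω => norm_nonneg _)
  have hUbd : ∀ i ω, |Ufn μ (X i) (X' i) (X i ω) (X' i ω)| ≤
      2 * (min ‖X i ω‖ ‖X' i ω‖ + ((∫ ω', ‖X i ω'‖ ∂μ) + ∫ ω', ‖X' i ω'‖ ∂μ)) := fun i ω =>
    Ufn_abs_le (X i) (X' i) (hint i) (hint' i) (X i ω) (X' i ω)
  have hUmeas : ∀ i, AEMeasurable (fun ω => Ufn μ (X i) (X' i) (X i ω) (X' i ω)) μ := by
    intro i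
    have hacont : Continuous (fun z : EuclideanSpace ℝ (Fin (p i)) => ∫ ω, ‖z - X i ω‖ ∂μ) :=
      (lip_integral_norm (X i) (hint i)).continuous
    have h1 : AEMeasurable (fun ω => ∫ ω', ‖X i ω - X i ω'‖ ∂μ) μ :=
      (hacont.measurable.comp (hm i)).aemeasurable
    have h2 : AEMeasurable (fun ω => ∫ ω', ‖X' i ω - X i ω'‖ ∂μ) μ :=
      (hacont.measurable.comp_aemeasurable (hXm' i))
    have h3 : AEMeasurable (fun ω => ‖X i ω - X' i ω‖) μ :=
      ((hm i).aemeasurable.sub (hXm' i)).norm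
    have hrw : (fun ω => Ufn μ (X i) (X' i) (X i ω) (X' i ω))
        = fun ω => (∫ ω', ‖X i ω - X i ω'‖ ∂μ) + (∫ ω', ‖X' i ω - X i ω'‖ ∂μ)
          - ‖X i ω - X' i ω‖ - ∫ ω', ‖X i ω' - X' i ω'‖ ∂μ :=
      funext fun ω => Ufn_eq (X i) (X' i) (X i ω) (X' i ω)
    rw [hrw]
    exact ((h1.add h2).sub h3).sub aemeasurable_const
  have hmin : ∀ T : Finset (Fin d), Integrable (fun ω => ∏ i ∈ T, min ‖X i ω‖ ‖X' i ω‖) μ :=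
    min_prod_integrable X X' hm hint hA hcopy.1 hcopy.2 hXm'
  have hUint : ∀ S : Finset (Fin d),
      Integrable (fun ω => ∏ i ∈ S, Ufn μ (X i) (X' i) (X i ω) (X' i ω)) μ := by
    intro S
    have hsm : AEStronglyMeasurable
        (fun ω => ∏ i ∈ S, Ufn μ (X i) (X' i) (X i ω) (X' i ω)) μ :=
      (Finset.aemeasurable_fun_prod S fun i _ => hUmeas i).aestronglyMeasurable
    have hg : Integrable (fun ω => ∏ i ∈ S,
        (2 * (min ‖X i ω‖ ‖X' i ω‖ + ((∫ ω', ‖X i ω'‖ ∂μ) + ∫ ω', ‖X' i ω'‖ ∂μ)))) μ := by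
      have hrw : (fun ω => ∏ i ∈ S,
          (2 * (min ‖X i ω‖ ‖X' i ω‖ + ((∫ ω', ‖X i ω'‖ ∂μ) + ∫ ω', ‖X' i ω'‖ ∂μ))))
          = fun ω => ∑ T ∈ S.powerset,
            ((2:ℝ) ^ T.card *
              ∏ i ∈ S \ T, (2 * ((∫ ω', ‖X i ω'‖ ∂μ) + ∫ ω', ‖X' i ω'‖ ∂μ)))
              * ∏ i ∈ T, min ‖X i ω‖ ‖X' i ω‖ := by
        funext ω
        calc ∏ i ∈ S, (2 * (min ‖X i ω‖ ‖X' i ω‖ + ((∫ ω', ‖X i ω'‖ ∂μ) + ∫ ω', ‖X' i ω'‖ ∂μ)))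
            = ∏ i ∈ S, (2 * min ‖X i ω‖ ‖X' i ω‖
                + 2 * ((∫ ω', ‖X i ω'‖ ∂μ) + ∫ ω', ‖X' i ω'‖ ∂μ)) :=
              Finset.prod_congr rfl fun i _ => by ring
          _ = ∑ T ∈ S.powerset, (∏ i ∈ T, (2 * min ‖X i ω‖ ‖X' i ω‖))
                * ∏ i ∈ S \ T, (2 * ((∫ ω', ‖X i ω'‖ ∂μ) + ∫ ω', ‖X' i ω'‖ ∂μ)) :=
              Finset.prod_add _ _ _
          _ = _ := by
              refine Finset.sum_congr rfl fun T _ => ?_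
              rw [Finset.prod_mul_distrib, Finset.prod_const]
              ring
      rw [hrw]
      exact integrable_finset_sum _ fun T _ => (hmin T).const_mul _
    refine hg.mono' hsm ?_
    filter_upwards with ω
    rw [Real.norm_eq_abs, Finset.abs_prod]
    exact Finset.prod_le_prod (fun i _ => abs_nonneg _) (fun i _ => hUbd i ω)
  have hUzero : ∀ i, ∫ ω, Ufn μ (X i) (X' i) (X i ω) (X' i ω) ∂μ = 0 := fun i =>
    Ufn_integral_zero (X i) (X' i) (hm i) (hint i) (hindep i) (hid i)
  have hexp : (∫ ω, ∏ i, (Ufn μ (X i) (X' i) (X i ω) (X' i ω) + c) ∂μ)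
      = ∑ T ∈ (Finset.univ : Finset (Finset (Fin d))),
        (∫ ω, ∏ i ∈ T, Ufn μ (X i) (X' i) (X i ω) (X' i ω) ∂μ) * c ^ (d - T.card) := by
    have h1 : (fun ω => ∏ i, (Ufn μ (X i) (X' i) (X i ω) (X' i ω) + c))
        = fun ω => ∑ T ∈ (Finset.univ : Finset (Fin d)).powerset,
            (∏ i ∈ T, Ufn μ (X i) (X' i) (X i ω) (X' i ω)) * c ^ (d - T.card) := by
      funext ω
      rw [Finset.prod_add]
      refine Finset.sum_congr rfl fun T hT => ?_
      rw [Finset.prod_const, Finset.card_sdiff_of_subset (Finset.mem_powerset.mp hT),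
        Finset.card_univ, Fintype.card_fin]
    rw [h1, integral_finset_sum _ fun T _ => (hUint T).mul_const _, Finset.powerset_univ]
    exact Finset.sum_congr rfl fun T _ => by rw [integral_mul_const]
  have hJ : JdCov2 μ X X' c
      = ∑ T ∈ Finset.univ.filter (fun T : Finset (Fin d) => 2 ≤ T.card),
        (∫ ω, ∏ i ∈ T, Ufn μ (X i) (X' i) (X i ω) (X' i ω) ∂μ) * c ^ (d - T.card) := by
    simp only [JdCov2, dCov2sub]
    exact Finset.sum_congr rfl fun T _ => by rw [mul_comm]
  constructor
  · rw [hexp]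
    rw [← Finset.sum_filter_add_sum_filter_not Finset.univ
      (fun T : Finset (Fin d) => 2 ≤ T.card)
      (fun T => (∫ ω, ∏ i ∈ T, Ufn μ (X i) (X' i) (X i ω) (X' i ω) ∂μ) * c ^ (d - T.card))]
    have hmem : (∅ : Finset (Fin d)) ∈
        Finset.univ.filter (fun T : Finset (Fin d) => ¬ 2 ≤ T.card) := by simp
    have hzero : ∀ T ∈ Finset.univ.filter (fun T : Finset (Fin d) => ¬ 2 ≤ T.card),
        T ≠ (∅ : Finset (Fin d)) →
        (∫ ω, ∏ i ∈ T, Ufn μ (X i) (X' i) (X i ω) (X' i ω) ∂μ) * c ^ (d - T.card) = 0 := by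
      intro T hT hne
      have h2 : ¬ 2 ≤ T.card := (Finset.mem_filter.mp hT).2
      have h0 : T.card ≠ 0 := fun h => hne (Finset.card_eq_zero.mp h)
      have h1 : T.card = 1 := by omega
      obtain ⟨i, rfl⟩ := Finset.card_eq_one.mp h1
      simp only [Finset.prod_singleton]
      rw [hUzero i, zero_mul]
    have hsmall : ∑ T ∈ Finset.univ.filter (fun T : Finset (Fin d) => ¬ 2 ≤ T.card),
        (∫ ω, ∏ i ∈ T, Ufn μ (X i) (X' i) (X i ω) (X' i ω) ∂μ) * c ^ (d - T.card)
        = c ^ d := by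
      rw [Finset.sum_eq_single_of_mem (∅ : Finset (Fin d)) hmem hzero]
      simp [integral_const]
    rw [hsmall, hJ]
    ring
  · intro hd2
    subst hd2
    have hfilt : Finset.univ.filter (fun S : Finset (Fin 2) => 2 ≤ S.card)
        = {Finset.univ} := by
      ext S
      simp only [Finset.mem_filter, Finset.mem_univ, true_and, Finset.mem_singleton]
      constructor
      · intro h
        refine Finset.eq_univ_of_card S (le_antisymm ?_ ?_)
        · simpa using S.card_le_univ
        · simpa using h
      · rintro rfl
        simp [Finset.card_univ]
    constructor
    · rw [hJ, hfilt, Finset.sum_singleton]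
      simp [Finset.card_univ]
    · rw [hJ, hfilt, Finset.sum_singleton]
      simp only [dCov2, dCov2sub, Finset.card_univ, Fintype.card_fin]
      norm_num
end
end

section
/- Let X_1,…,X_d (d ≥ 2, X_i ∈ ℝ^{p_i}) satisfy E|X_i| < ∞ and Assumption 1. For any vectors a_i ∈ ℝ^{p_i}, any scalar c_0 ∈ ℝ, any orthogonal linear maps A_i : ℝ^{p_i} → ℝ^{p_i}, and any c ≥ 0: JdCov²(a_1 + c_0A_1X_1, …, a_d + c_0A_dX_d; |c_0|·c) = |c_0|^d · JdCov²(X_1,…,X_d; c). Moreover, for every permutation σ of {1,…,d}, JdCov²(X_{σ(1)},…,X_{σ(d)}; c) = JdCov²(X_1,…,X_d; c). -/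
open MeasureTheory ProbabilityTheory Filter Finset
open scoped BigOperators RealInnerProductSpace Classical

noncomputable section

lemma Ufn_affine {Ω : Type*} [MeasurableSpace Ω] (μ : Measure Ω) {E : Type*}
    [NormedAddCommGroup E] [NormedSpace ℝ E] (X X' : Ω → E) (a : E) (c₀ : ℝ)
    (A : E ≃ₗᵢ[ℝ] E) (x x' : E) :
    Ufn μ (fun ω => a + c₀ • A (X ω)) (fun ω => a + c₀ • A (X' ω))
      (a + c₀ • A x) (a + c₀ • A x') = |c₀| * Ufn μ X X' x x' := by
  have key : ∀ y z : E, ‖(a + c₀ • A y) - (a + c₀ • A z)‖ = |c₀| * ‖y - z‖ := by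
    intro y z
    rw [add_sub_add_left_eq_sub, ← smul_sub, ← map_sub, norm_smul, A.norm_map,
      Real.norm_eq_abs]
  simp only [Ufn, key]
  rw [integral_const_mul, integral_const_mul, integral_const_mul]
  ring

lemma dCov2sub_affine {Ω : Type*} [MeasurableSpace Ω] (μ : Measure Ω) {d : ℕ}
    {E : Fin d → Type*} [∀ i, NormedAddCommGroup (E i)] [∀ i, NormedSpace ℝ (E i)]
    [IsProbabilityMeasure μ]
    (X X' : (i : Fin d) → Ω → E i) (a : (i : Fin d) → E i) (c₀ : ℝ)
    (A : (i : Fin d) → E i ≃ₗᵢ[ℝ] E i) (S : Finset (Fin d)) :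
    dCov2sub μ (fun i ω => a i + c₀ • (A i) (X i ω))
      (fun i ω => a i + c₀ • (A i) (X' i ω)) S = |c₀| ^ S.card * dCov2sub μ X X' S := by
  unfold dCov2sub
  have : ∀ ω : Ω,
      (∏ i ∈ S, Ufn μ (fun ω => a i + c₀ • (A i) (X i ω))
        (fun ω => a i + c₀ • (A i) (X' i ω)) (a i + c₀ • (A i) (X i ω))
        (a i + c₀ • (A i) (X' i ω)))
      = |c₀| ^ S.card * ∏ i ∈ S, Ufn μ (X i) (X' i) (X i ω) (X' i ω) := by
    intro ω
    rw [← Finset.prod_const, ← Finset.prod_mul_distrib]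
    exact Finset.prod_congr rfl fun i _ => Ufn_affine μ (X i) (X' i) (a i) c₀ (A i) _ _
  simp_rw [this]
  rw [integral_const_mul]

lemma dCov2sub_perm {Ω : Type*} [MeasurableSpace Ω] (μ : Measure Ω) {d : ℕ}
    {E : Fin d → Type*} [∀ i, NormedAddCommGroup (E i)]
    (X X' : (i : Fin d) → Ω → E i) (σ : Equiv.Perm (Fin d)) (S : Finset (Fin d)) :
    dCov2sub μ (fun i ω => X (σ i) ω) (fun i ω => X' (σ i) ω) S
      = dCov2sub μ X X' (S.image σ) := by
  unfold dCov2sub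
  congr 1
  funext ω
  rw [Finset.prod_image (fun x _ y _ h => σ.injective h)]

/-- Proposition 3(1). Invariance of `JdCov²` under translation, common
scaling, orthogonal transformation, and permutation. -/
theorem stmt8 {Ω : Type*} [MeasurableSpace Ω] (μ : Measure Ω) [IsProbabilityMeasure μ]
    {d : ℕ} (hd : 2 ≤ d) {p : Fin d → ℕ}
    (X X' : (i : Fin d) → Ω → EuclideanSpace ℝ (Fin (p i)))
    (hm : ∀ i, Measurable (X i)) (hint : ∀ i, Integrable (X i) μ)
    (hA : Assumption1 μ X) (hcopy : IsIndepCopy μ X X')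
    (a : (i : Fin d) → EuclideanSpace ℝ (Fin (p i))) (c₀ : ℝ)
    (A : (i : Fin d) → EuclideanSpace ℝ (Fin (p i)) ≃ₗᵢ[ℝ] EuclideanSpace ℝ (Fin (p i)))
    (c : ℝ) (hc : 0 ≤ c) (σ : Equiv.Perm (Fin d)) :
    JdCov2 μ (fun i ω => a i + c₀ • (A i) (X i ω)) (fun i ω => a i + c₀ • (A i) (X' i ω))
        (|c₀| * c) = |c₀| ^ d * JdCov2 μ X X' c ∧
    JdCov2 μ (fun i ω => X (σ i) ω) (fun i ω => X' (σ i) ω) c = JdCov2 μ X X' c := by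
  constructor
  · unfold JdCov2
    rw [Finset.mul_sum]
    refine Finset.sum_congr rfl fun S hS => ?_
    rw [dCov2sub_affine]
    have hcard : S.card ≤ d := by
      simpa using Finset.card_le_univ S
    rw [mul_pow]
    have : |c₀| ^ (d - S.card) * |c₀| ^ S.card = |c₀| ^ d := by
      rw [← pow_add, Nat.sub_add_cancel hcard]
    rw [← this]; ring
  · unfold JdCov2
    refine Finset.sum_nbij' (fun S => S.image σ) (fun T => T.image σ.symm) ?_ ?_ ?_ ?_ ?_
    · intro S hS
      simp only [Finset.mem_filter, Finset.mem_univ, true_and] at hS ⊢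
      rwa [Finset.card_image_of_injective _ σ.injective]
    · intro T hT
      simp only [Finset.mem_filter, Finset.mem_univ, true_and] at hT ⊢
      rwa [Finset.card_image_of_injective _ σ.symm.injective]
    · intro S _
      ext i
      simp [Finset.mem_image]
    · intro T _
      ext i
      simp [Finset.mem_image]
    · intro S _
      beta_reduce
      rw [dCov2sub_perm μ X X' σ S, Finset.card_image_of_injective _ σ.injective]
end
end

section
/- For any n ≥ 1, d ≥ 2, any points X_{ji} ∈ ℝ^{p_i} (1 ≤ j ≤ n, 1 ≤ i ≤ d), and any c ≥ 0: n^{-2} Σ_{k,l=1}^n ∏_{i=1}^d (Û_i(k,l) + c) − c^d = Σ_{S ⊆ {1,…,d}, |S| ≥ 2} c^{d−|S|} ( n^{-2} Σ_{k,l=1}^n ∏_{i∈S} Û_i(k,l) ); that is, the V-statistic estimator of the squared joint distance covariance decomposes into the weighted sum of the V-statistic estimators of the squared distance covariances of all subcollections of size at least 2. -/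
open MeasureTheory ProbabilityTheory Filter Finset
open scoped BigOperators RealInnerProductSpace Classical

noncomputable section

/-- the sample quantity `Û_i(k,l)` built from `n` points in each coordinate space. -/
def Uhat {n d : ℕ} {E : Fin d → Type*} [∀ i, NormedAddCommGroup (E i)]
    (X : (i : Fin d) → Fin n → E i) (i : Fin d) (k l : Fin n) : ℝ :=
  (n : ℝ)⁻¹ * ∑ v, ‖X i k - X i v‖ + (n : ℝ)⁻¹ * ∑ u, ‖X i u - X i l‖
    - ‖X i k - X i l‖ - ((n : ℝ) ^ 2)⁻¹ * ∑ u, ∑ v, ‖X i u - X i v‖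

lemma Uhat_sum_zero {n d : ℕ} {E : Fin d → Type*} [∀ i, NormedAddCommGroup (E i)]
    (hn : 1 ≤ n) (X : (i : Fin d) → Fin n → E i) (i : Fin d) :
    ∑ k : Fin n, ∑ l : Fin n, Uhat X i k l = 0 := by
  have hn' : (n : ℝ) ≠ 0 := Nat.cast_ne_zero.mpr (by omega)
  simp only [Uhat, Finset.sum_sub_distrib, Finset.sum_add_distrib, Finset.sum_const,
    Finset.card_univ, Fintype.card_fin, nsmul_eq_mul, ← Finset.mul_sum]
  rw [Finset.sum_comm (f := fun k l => ‖X i k - X i l‖)]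
  field_simp
  ring

/-- The V-statistic estimator of `JdCov²` decomposes into the weighted sum
of the V-statistic estimators of the squared distance covariances of all subcollections of
size at least 2. -/
theorem stmt11 {n d : ℕ} (hn : 1 ≤ n) (hd : 2 ≤ d) {p : Fin d → ℕ}
    (X : (i : Fin d) → Fin n → EuclideanSpace ℝ (Fin (p i))) (c : ℝ) (hc : 0 ≤ c) :
    ((n : ℝ) ^ 2)⁻¹ * (∑ k : Fin n, ∑ l : Fin n, ∏ i, (Uhat X i k l + c)) - c ^ d
      = ∑ S ∈ Finset.univ.filter (fun S : Finset (Fin d) => 2 ≤ S.card),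
          c ^ (d - S.card) *
            (((n : ℝ) ^ 2)⁻¹ * ∑ k : Fin n, ∑ l : Fin n, ∏ i ∈ S, Uhat X i k l) := by
  have hn' : (n : ℝ) ≠ 0 := Nat.cast_ne_zero.mpr (by omega)
  have key : ∀ k l : Fin n, ∏ i, (Uhat X i k l + c)
      = ∑ S : Finset (Fin d), c ^ (d - S.card) * ∏ i ∈ S, Uhat X i k l := by
    intro k l
    rw [Finset.prod_add, Finset.powerset_univ]
    refine Finset.sum_congr rfl fun S hS => ?_
    rw [Finset.prod_const, Finset.card_sdiff_of_subset (Finset.subset_univ S),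
      Finset.card_univ, Fintype.card_fin, mul_comm]
  have sumeq : ∑ k : Fin n, ∑ l : Fin n, ∏ i, (Uhat X i k l + c)
      = ∑ S : Finset (Fin d), c ^ (d - S.card) * ∑ k : Fin n, ∑ l : Fin n,
          ∏ i ∈ S, Uhat X i k l := by
    simp only [key]
    have h2 : ∀ k : Fin n, (∑ l : Fin n, ∑ S : Finset (Fin d),
        c ^ (d - S.card) * ∏ i ∈ S, Uhat X i k l)
        = ∑ S : Finset (Fin d), ∑ l : Fin n, c ^ (d - S.card) * ∏ i ∈ S, Uhat X i k l :=
      fun k => Finset.sum_comm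
    simp only [h2]
    rw [Finset.sum_comm]
    simp only [← Finset.mul_sum]
  rw [sumeq, Finset.mul_sum,
    ← Finset.sum_filter_add_sum_filter_not Finset.univ
      (fun S : Finset (Fin d) => 2 ≤ S.card)]
  have hz : ∑ S ∈ Finset.univ.filter (fun S : Finset (Fin d) => ¬ 2 ≤ S.card),
      ((n : ℝ) ^ 2)⁻¹ * (c ^ (d - S.card) * ∑ k : Fin n, ∑ l : Fin n, ∏ i ∈ S, Uhat X i k l)
      = c ^ d := by
    have hsub : Finset.univ.filter (fun S : Finset (Fin d) => ¬ 2 ≤ S.card)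
        = {∅} ∪ Finset.univ.filter (fun S : Finset (Fin d) => S.card = 1) := by
      ext S
      simp only [Finset.mem_filter, Finset.mem_univ, true_and, Finset.mem_union,
        Finset.mem_singleton]
      constructor
      · intro h
        have : S.card = 0 ∨ S.card = 1 := by omega
        rcases this with h0 | h1
        · exact Or.inl (Finset.card_eq_zero.mp h0)
        · exact Or.inr h1
      · intro h
        rcases h with h0 | h1
        · subst h0; simp
        · omega
    have hdisj : Disjoint ({∅} : Finset (Finset (Fin d)))
        (Finset.univ.filter (fun S : Finset (Fin d) => S.card = 1)) := by
      rw [Finset.disjoint_singleton_left]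
      simp
    rw [hsub, Finset.sum_union hdisj]
    have h1 : ∑ S ∈ Finset.univ.filter (fun S : Finset (Fin d) => S.card = 1),
        ((n : ℝ) ^ 2)⁻¹ * (c ^ (d - S.card) * ∑ k : Fin n, ∑ l : Fin n, ∏ i ∈ S, Uhat X i k l)
        = 0 := by
      refine Finset.sum_eq_zero fun S hS => ?_
      simp only [Finset.mem_filter] at hS
      obtain ⟨i, rfl⟩ := Finset.card_eq_one.mp hS.2
      simp [Uhat_sum_zero hn X i]
    rw [h1, add_zero, Finset.sum_singleton]
    simp only [Finset.prod_empty, Finset.sum_const, Finset.card_univ, Fintype.card_fin,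
      nsmul_eq_mul, mul_one, Finset.card_empty, Nat.sub_zero]
    rw [show ((n:ℝ) * (n:ℝ)) = (n:ℝ)^2 by ring]
    rw [mul_comm, mul_assoc, mul_inv_cancel₀ (by positivity), mul_one]
  rw [hz, add_sub_cancel_right]
  refine Finset.sum_congr rfl fun S _ => ?_
  ring
end
end

section
/- Let X_1,…,X_d (d ≥ 2, X_i ∈ ℝ^{p_i}) satisfy E|X_i| < ∞, let (X_1',…,X_d') be an independent copy of (X_1,…,X_d), and suppose E[|U_{X_i}(X_i,X_i')|^d] < ∞ for each i. Then dCov²(X_1,…,X_d) ≤ ∏_{i=1}^d ( E[|U_{X_i}(X_i,X_i')|^d] )^{1/d}. In particular, when d is even, dCov²(X_1,…,X_d) ≤ ∏_{i=1}^d ( E[U_{X_i}(X_i,X_i')^d] )^{1/d}, where E[U_{X_i}(X_i,X_i')^d] is the d-th order squared distance covariance of d copies of X_i. -/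
open MeasureTheory ProbabilityTheory Filter Finset
open scoped BigOperators RealInnerProductSpace Classical

noncomputable section

open scoped ENNReal in
lemma lip_left {Ω : Type*} [MeasurableSpace Ω] (μ : Measure Ω) [IsProbabilityMeasure μ]
    {E : Type*} [NormedAddCommGroup E] (X : Ω → E) (hint : Integrable X μ) :
    LipschitzWith 1 (fun x => ∫ ω, ‖x - X ω‖ ∂μ) := by
  refine LipschitzWith.of_dist_le_mul fun x y => ?_
  rw [NNReal.coe_one, one_mul, Real.dist_eq]
  have h1 : Integrable (fun ω => ‖x - X ω‖) μ := ((integrable_const x).sub hint).norm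
  have h2 : Integrable (fun ω => ‖y - X ω‖) μ := ((integrable_const y).sub hint).norm
  rw [← integral_sub h1 h2]
  calc |∫ ω, (‖x - X ω‖ - ‖y - X ω‖) ∂μ|
      ≤ ∫ ω, |‖x - X ω‖ - ‖y - X ω‖| ∂μ := by
        simpa [Real.norm_eq_abs] using
          norm_integral_le_integral_norm (μ := μ) (fun ω => ‖x - X ω‖ - ‖y - X ω‖)
    _ ≤ ∫ _ω, dist x y ∂μ := by
        refine integral_mono (h1.sub h2).abs (integrable_const _) fun ω => ?_
        calc |‖x - X ω‖ - ‖y - X ω‖| ≤ ‖(x - X ω) - (y - X ω)‖ := abs_norm_sub_norm_le _ _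
          _ = dist x y := by rw [sub_sub_sub_cancel_right, dist_eq_norm]
    _ = dist x y := by simp

open scoped ENNReal in
lemma lip_right {Ω : Type*} [MeasurableSpace Ω] (μ : Measure Ω) [IsProbabilityMeasure μ]
    {E : Type*} [NormedAddCommGroup E] (X : Ω → E) (hint : Integrable X μ) :
    LipschitzWith 1 (fun x => ∫ ω, ‖X ω - x‖ ∂μ) := by
  refine LipschitzWith.of_dist_le_mul fun x y => ?_
  rw [NNReal.coe_one, one_mul, Real.dist_eq]
  have h1 : Integrable (fun ω => ‖X ω - x‖) μ := (hint.sub (integrable_const x)).norm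
  have h2 : Integrable (fun ω => ‖X ω - y‖) μ := (hint.sub (integrable_const y)).norm
  rw [← integral_sub h1 h2]
  calc |∫ ω, (‖X ω - x‖ - ‖X ω - y‖) ∂μ|
      ≤ ∫ ω, |‖X ω - x‖ - ‖X ω - y‖| ∂μ := by
        simpa [Real.norm_eq_abs] using
          norm_integral_le_integral_norm (μ := μ) (fun ω => ‖X ω - x‖ - ‖X ω - y‖)
    _ ≤ ∫ _ω, dist x y ∂μ := by
        refine integral_mono (h1.sub h2).abs (integrable_const _) fun ω => ?_
        calc |‖X ω - x‖ - ‖X ω - y‖| ≤ ‖(X ω - x) - (X ω - y)‖ := abs_norm_sub_norm_le _ _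
          _ = dist x y := by
              rw [sub_sub_sub_cancel_left, dist_eq_norm, norm_sub_rev]
    _ = dist x y := by simp

open scoped ENNReal in
/-- Proposition 0.1(2). Hölder-type upper bound for `dCov²`. -/
theorem stmt17 {Ω : Type*} [MeasurableSpace Ω] (μ : Measure Ω) [IsProbabilityMeasure μ]
    {d : ℕ} (hd : 2 ≤ d) {p : Fin d → ℕ}
    (X X' : (i : Fin d) → Ω → EuclideanSpace ℝ (Fin (p i)))
    (hm : ∀ i, Measurable (X i)) (hint : ∀ i, Integrable (X i) μ)
    (hcopy : IsIndepCopy μ X X')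
    (hmom : ∀ i, Integrable (fun ω => |Ufn μ (X i) (X' i) (X i ω) (X' i ω)| ^ d) μ) :
    dCov2 μ X X'
        ≤ (∏ i, (∫ ω, |Ufn μ (X i) (X' i) (X i ω) (X' i ω)| ^ d ∂μ) ^ ((d : ℝ)⁻¹)) ∧
    (Even d → dCov2 μ X X'
        ≤ ∏ i, (∫ ω, (Ufn μ (X i) (X' i) (X i ω) (X' i ω)) ^ d ∂μ) ^ ((d : ℝ)⁻¹)) := by
  set g : Fin d → Ω → ℝ := fun i ω => Ufn μ (X i) (X' i) (X i ω) (X' i ω) with hgdef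
  have hdR : (d : ℝ) ≠ 0 := by positivity
  -- measurability of X' i
  have hX' : ∀ i, AEMeasurable (X' i) μ := fun i =>
    (measurable_pi_apply i).comp_aemeasurable hcopy.2.aemeasurable_snd
  -- measurability of g i
  have hgm : ∀ i, AEMeasurable (g i) μ := by
    intro i
    have h1 : AEMeasurable (fun ω => ∫ ω', ‖X i ω - X i ω'‖ ∂μ) μ :=
      ((lip_left μ (X i) (hint i)).continuous.measurable.comp (hm i)).aemeasurable
    have h2 : AEMeasurable (fun ω => ∫ ω', ‖X i ω' - X' i ω‖ ∂μ) μ :=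
      (lip_right μ (X i) (hint i)).continuous.measurable.comp_aemeasurable (hX' i)
    have h3 : AEMeasurable (fun ω => ‖X i ω - X' i ω‖) μ :=
      ((hm i).aemeasurable.sub (hX' i)).norm
    exact ((h1.add h2).sub h3).sub aemeasurable_const
  set F : Fin d → Ω → ℝ≥0∞ := fun i ω => (‖g i ω‖₊ : ℝ≥0∞) with hFdef
  have hFm : ∀ i, AEMeasurable (F i) μ := fun i => (hgm i).enorm
  -- finiteness of d-th moments in ℝ≥0∞
  have hfin : ∀ i, ∫⁻ ω, F i ω ^ d ∂μ < ⊤ := by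
    intro i
    have h := (hmom i).hasFiniteIntegral
    rw [hasFiniteIntegral_iff_ofReal (Filter.Eventually.of_forall fun ω => by positivity)] at h
    refine lt_of_eq_of_lt (lintegral_congr fun ω => ?_) h
    rw [hFdef]
    simp [ENNReal.coe_pow, Real.enorm_eq_ofReal_abs, ENNReal.ofReal_pow (abs_nonneg (g i ω))]
    rw [← Real.enorm_eq_ofReal_abs]
    rfl
  -- Hölder
  have key : ∫⁻ ω, ∏ i, F i ω ∂μ ≤ ∏ i, (∫⁻ ω, F i ω ^ d ∂μ) ^ ((d : ℝ)⁻¹) := by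
    have h := ENNReal.lintegral_prod_norm_pow_le (μ := μ) Finset.univ
      (f := fun i ω => F i ω ^ d)
      (fun i _ => (hFm i).pow_const d)
      (p := fun _ => (d : ℝ)⁻¹)
      (by simp [Finset.card_univ, hdR]) (fun i _ => by positivity)
    calc ∫⁻ ω, ∏ i, F i ω ∂μ
        = ∫⁻ ω, ∏ i, (F i ω ^ d) ^ ((d : ℝ)⁻¹) ∂μ := by
          congr 1 with ω
          congr 1 with i
          rw [← ENNReal.rpow_natCast (F i ω) d, ← ENNReal.rpow_mul,
            mul_inv_cancel₀ hdR, ENNReal.rpow_one]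
      _ ≤ ∏ i, (∫⁻ ω, F i ω ^ d ∂μ) ^ ((d : ℝ)⁻¹) := h
  have hRne : ∀ i, (∫⁻ ω, F i ω ^ d ∂μ) ^ ((d : ℝ)⁻¹) ≠ ⊤ := fun i =>
    ENNReal.rpow_ne_top_of_nonneg (by positivity) (hfin i).ne
  have hRfin : ∏ i, (∫⁻ ω, F i ω ^ d ∂μ) ^ ((d : ℝ)⁻¹) ≠ ⊤ :=
    (ENNReal.prod_lt_top (fun i _ => (hRne i).lt_top)).ne
  -- value of the moment integrals
  have hmomval : ∀ i, ∫ ω, |g i ω| ^ d ∂μ = (∫⁻ ω, F i ω ^ d ∂μ).toReal := by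
    intro i
    rw [integral_eq_lintegral_of_nonneg_ae (Filter.Eventually.of_forall fun ω => by positivity)
      (hmom i).1]
    congr 1
    apply lintegral_congr fun ω => ?_
    rw [hFdef]
    simp [ENNReal.coe_pow, Real.enorm_eq_ofReal_abs, ENNReal.ofReal_pow (abs_nonneg (g i ω))]
    rw [← Real.enorm_eq_ofReal_abs]
    rfl
  have main : dCov2 μ X X' ≤ ∏ i, (∫ ω, |g i ω| ^ d ∂μ) ^ ((d : ℝ)⁻¹) := by
    have hprodm : AEStronglyMeasurable (fun ω => ∏ i, g i ω) μ :=
      (Finset.aemeasurable_fun_prod Finset.univ fun i _ => hgm i).aestronglyMeasurable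
    have h2 : ∫ ω, ‖∏ i, g i ω‖ ∂μ = (∫⁻ ω, ∏ i, F i ω ∂μ).toReal := by
      rw [integral_norm_eq_lintegral_enorm hprodm]
      congr 1
      refine lintegral_congr fun ω => ?_
      rw [hFdef]
      push_cast [nnnorm_prod]
      rw [enorm_eq_nnnorm, nnnorm_prod, ENNReal.coe_finset_prod]
    calc dCov2 μ X X' = ∫ ω, ∏ i, g i ω ∂μ := rfl
      _ ≤ ‖∫ ω, ∏ i, g i ω ∂μ‖ := le_abs_self _
      _ ≤ ∫ ω, ‖∏ i, g i ω‖ ∂μ := norm_integral_le_integral_norm _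
      _ = (∫⁻ ω, ∏ i, F i ω ∂μ).toReal := h2
      _ ≤ (∏ i, (∫⁻ ω, F i ω ^ d ∂μ) ^ ((d : ℝ)⁻¹)).toReal := ENNReal.toReal_mono hRfin key
      _ = ∏ i, ((∫⁻ ω, F i ω ^ d ∂μ) ^ ((d : ℝ)⁻¹)).toReal := ENNReal.toReal_prod _ _
      _ = ∏ i, (∫ ω, |g i ω| ^ d ∂μ) ^ ((d : ℝ)⁻¹) := by
          refine Finset.prod_congr rfl fun i _ => ?_
          rw [hmomval i, ENNReal.toReal_rpow]
  refine ⟨main, fun he => ?_⟩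
  have heq : ∀ i, (∫ ω, (g i ω) ^ d ∂μ) = ∫ ω, |g i ω| ^ d ∂μ := fun i =>
    integral_congr_ae (Filter.Eventually.of_forall fun ω => (he.pow_abs _).symm)
  calc dCov2 μ X X' ≤ ∏ i, (∫ ω, |g i ω| ^ d ∂μ) ^ ((d : ℝ)⁻¹) := main
    _ = ∏ i, (∫ ω, (g i ω) ^ d ∂μ) ^ ((d : ℝ)⁻¹) := by simp_rw [heq]
end
end

section
/- Let (X^{(j)})_{j=1}^n be i.i.d. copies of a random vector (X_1,…,X_d) with X_i ∈ ℝ^{p_i}, where X_1,…,X_d are mutually independent. Let f_i(t) = E[exp(i⟨t,X_i⟩)] be the characteristic function of X_i and f̂_i(t) = n^{-1}Σ_{j=1}^n exp(i⟨t, X^{(j)}_i⟩) the empirical characteristic function. Define the empirical process Γ_n(t_1,…,t_d) = n^{-1/2} Σ_{j=1}^n ∏_{i=1}^d ( f̂_i(t_i) − exp(i⟨t_i, X^{(j)}_i⟩) ). Then for all t = (t_1,…,t_d) and t_0 = (t_{10},…,t_{d0}) with t_i, t_{i0} ∈ ℝ^{p_i}: E[Γ_n(t)] = 0 and E[Γ_n(t)·conj(Γ_n(t_0))]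 = c_n ∏_{i=1}^d ( f_i(t_i − t_{i0}) − f_i(t_i) f_i(−t_{i0}) ), where c_n = ((n−1)/n)^d + (n−1)(−1/n)^d and conj denotes complex conjugation. -/
open MeasureTheory ProbabilityTheory Filter Finset
open scoped BigOperators RealInnerProductSpace Classical

noncomputable section

/-- the empirical process `Γ_n(t)(ω) = n^{-1/2} Σ_j ∏ᵢ (f̂ᵢ(tᵢ)(ω) − e^{i⟪tᵢ, W_jᵢ(ω)⟫})`. -/
def Gamman {Ω : Type*} {d n : ℕ} {p : Fin d → ℕ}
    (W : Fin n → Ω → (i : Fin d) → EuclideanSpace ℝ (Fin (p i)))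
    (t : (i : Fin d) → EuclideanSpace ℝ (Fin (p i))) (ω : Ω) : ℂ :=
  ((Real.sqrt n : ℝ) : ℂ)⁻¹ * ∑ j : Fin n, ∏ i,
    ((n : ℂ)⁻¹ * ∑ j' : Fin n, Complex.exp (Complex.I * ((⟪t i, W j' ω i⟫ : ℝ) : ℂ))
      - Complex.exp (Complex.I * ((⟪t i, W j ω i⟫ : ℝ) : ℂ)))


section AuxLemmas

theorem aux_integral_pi_prod_fin {m : ℕ} {E : Fin m → Type*} [∀ i, MeasurableSpace (E i)]
    (μ : ∀ i, Measure (E i)) [∀ i, SigmaFinite (μ i)] (f : ∀ i, E i → ℂ) :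
    ∫ x, ∏ i, f i (x i) ∂Measure.pi μ = ∏ i, ∫ x, f i x ∂μ i := by
  induction m with
  | zero => simp [measureReal_def, Measure.pi_univ]
  | succ m ih =>
      calc
        _ = ∫ x : E 0 × ((i : Fin m) → E (Fin.succ i)),
            f 0 x.1 * ∏ i : Fin m, f (Fin.succ i) (x.2 i)
              ∂((μ 0).prod (Measure.pi fun i => μ (Fin.succ i))) := by
          rw [← ((measurePreserving_piFinSuccAbove μ 0).symm).integral_comp']
          simp_rw [MeasurableEquiv.piFinSuccAbove_symm_apply, Fin.insertNthEquiv,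
            Fin.prod_univ_succ, Fin.insertNth_zero, Equiv.coe_fn_mk, Fin.cons_succ,
            Fin.cons_zero]
          rfl
        _ = _ := by
          rw [Fin.prod_univ_succ, ← ih (fun i => μ i.succ) (fun i => f i.succ),
            ← integral_prod_mul]

theorem aux_integral_pi_prod {ι : Type*} [Fintype ι] {E : ι → Type*}
    [∀ i, MeasurableSpace (E i)] (μ : ∀ i, Measure (E i)) [∀ i, SigmaFinite (μ i)]
    (f : ∀ i, E i → ℂ) :
    ∫ x, ∏ i, f i (x i) ∂Measure.pi μ = ∏ i, ∫ x, f i x ∂μ i := by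
  let e := (Fintype.equivFin ι).symm
  rw [← (measurePreserving_piCongrLeft μ e).integral_comp']
  simp_rw [← e.prod_comp, MeasurableEquiv.coe_piCongrLeft, Equiv.piCongrLeft_apply_apply]
  exact aux_integral_pi_prod_fin _ _

def auxSwapEquiv {m k : ℕ} (E : Fin k → Type*) [∀ i, MeasurableSpace (E i)] :
    (Fin m → ∀ i, E i) ≃ᵐ (∀ i, Fin m → E i) where
  toEquiv := Equiv.piComm fun (_ : Fin m) (i : Fin k) => E i
  measurable_toFun := measurable_pi_lambda _ fun i => measurable_pi_lambda _ fun j =>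
    (measurable_pi_apply i).comp (measurable_pi_apply j)
  measurable_invFun := measurable_pi_lambda _ fun j => measurable_pi_lambda _ fun i =>
    (measurable_pi_apply j).comp (measurable_pi_apply i)

theorem aux_measurePreserving_swap {m k : ℕ} {E : Fin k → Type*} [∀ i, MeasurableSpace (E i)]
    (ν : ∀ i, Measure (E i)) [∀ i, IsProbabilityMeasure (ν i)] :
    MeasurePreserving (auxSwapEquiv (m := m) E)
      (Measure.pi fun _ : Fin m => Measure.pi ν)
      (Measure.pi fun i => Measure.pi fun _ : Fin m => ν i) := by
  refine ⟨(auxSwapEquiv E).measurable, ?_⟩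
  refine (Measure.pi_eq_generateFrom (C := fun i =>
      Set.pi Set.univ '' Set.pi Set.univ fun _ : Fin m => { s : Set (E i) | MeasurableSet s })
      (fun i => generateFrom_pi) (fun i => isPiSystem_pi) (fun i => ?_) ?_).symm
  · refine ⟨fun _ => Set.univ, fun _ => ⟨fun _ => Set.univ, fun _ _ => MeasurableSet.univ, by simp⟩,
      fun _ => by simp, by simp [Set.iUnion_const]⟩
  · rintro s hs
    choose s' hs' hss using hs
    have hpre : (auxSwapEquiv (m := m) E) ⁻¹' (Set.pi Set.univ s) =
        Set.pi Set.univ fun j : Fin m => Set.pi Set.univ fun i => s' i j := by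
      ext x
      simp only [Set.mem_preimage, Set.mem_pi, Set.mem_univ, forall_true_left]
      constructor
      · intro h j i
        have h2 := h i
        rw [← hss i] at h2
        exact h2 j (Set.mem_univ j)
      · intro h i
        rw [← hss i]
        exact fun j _ => h j i
    rw [MeasurableEquiv.map_apply, hpre, Measure.pi_pi]
    have h3 : ∀ i, (Measure.pi fun _ : Fin m => ν i) (s i) = ∏ j : Fin m, ν i (s' i j) := by
      intro i; rw [← hss i, Measure.pi_pi]
    simp_rw [Measure.pi_pi, h3]
    rw [Finset.prod_comm]

theorem aux_integral_swap_prod {m k : ℕ} {E : Fin k → Type*} [∀ i, MeasurableSpace (E i)]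
    (ν : ∀ i, Measure (E i)) [∀ i, IsProbabilityMeasure (ν i)]
    (F : ∀ i, (Fin m → E i) → ℂ) :
    ∫ x, ∏ i, F i (fun j => x j i) ∂(Measure.pi fun _ : Fin m => Measure.pi ν)
      = ∏ i, ∫ y, F i y ∂(Measure.pi fun _ : Fin m => ν i) := by
  rw [← aux_integral_pi_prod (fun i => Measure.pi fun _ : Fin m => ν i) F,
    ← (aux_measurePreserving_swap ν).integral_comp' (fun y => ∏ i, F i (y i))]
  rfl

theorem aux_prod_two {m : ℕ} {a b : Fin m} (hab : a ≠ b) (h : Fin m → ℂ)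
    (h1 : ∀ c, c ≠ a → c ≠ b → h c = 1) : ∏ c, h c = h a * h b := by
  have hb : b ∈ Finset.univ.erase a := Finset.mem_erase.2 ⟨Ne.symm hab, Finset.mem_univ b⟩
  have h2 : ∏ c ∈ (Finset.univ.erase a).erase b, h c = 1 := by
    refine Finset.prod_eq_one fun c hc => ?_
    simp only [Finset.mem_erase] at hc
    exact h1 c hc.2.1 hc.1
  rw [← Finset.mul_prod_erase Finset.univ h (Finset.mem_univ a),
    ← Finset.mul_prod_erase _ h hb, h2, mul_one]

theorem aux_integral_eval {m : ℕ} {α : Type*} [MeasurableSpace α] (ν : Measure α)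
    [IsProbabilityMeasure ν] (f : α → ℂ) (a : Fin m) :
    ∫ y : Fin m → α, f (y a) ∂(Measure.pi fun _ => ν) = ∫ x, f x ∂ν := by
  have h := aux_integral_pi_prod (fun _ : Fin m => ν)
    (fun c x => if c = a then f x else 1)
  have hint : ∀ c : Fin m, ∫ x, (if c = a then f x else 1 : ℂ) ∂ν
      = if c = a then ∫ x, f x ∂ν else 1 := by
    intro c; split_ifs with hc
    · rfl
    · simp
  simp only [hint] at h
  simpa using h

theorem aux_integral_eval_two {m : ℕ} {α : Type*} [MeasurableSpace α] (ν : Measure α)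
    [IsProbabilityMeasure ν] (f g : α → ℂ) {a b : Fin m} (hab : a ≠ b) :
    ∫ y : Fin m → α, f (y a) * g (y b) ∂(Measure.pi fun _ => ν)
      = (∫ x, f x ∂ν) * ∫ x, g x ∂ν := by
  have h := aux_integral_pi_prod (fun _ : Fin m => ν)
    (fun c x => if c = a then f x else if c = b then g x else 1)
  have hint : ∀ c : Fin m, ∫ x, (if c = a then f x else if c = b then g x else 1 : ℂ) ∂ν
      = if c = a then ∫ x, f x ∂ν else if c = b then ∫ x, g x ∂ν else 1 := by
    intro c; split_ifs with hc hc2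
    · rfl
    · rfl
    · simp
  simp only [hint] at h
  have hpt : ∀ y : Fin m → α,
      (∏ i : Fin m, if i = a then f (y i) else if i = b then g (y i) else 1) =
        f (y a) * g (y b) := by
    intro y
    rw [aux_prod_two hab _ (fun c hca hcb => by simp [hca, hcb])]
    simp [Ne.symm hab]
  simp only [hpt] at h
  rw [aux_prod_two hab _ (fun c hca hcb => by simp [hca, hcb])] at h
  simp only [if_pos rfl, if_neg (Ne.symm hab)] at h
  simpa using h

theorem aux_integrable {α : Type*} [MeasurableSpace α] {μ : Measure α} [IsFiniteMeasure μ]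
    {f : α → ℂ} (hf : AEStronglyMeasurable f μ) {C : ℝ} (h : ∀ x, ‖f x‖ ≤ C) :
    Integrable f μ := ⟨hf, HasFiniteIntegral.of_bounded (ae_of_all μ h)⟩

/-- `f̂(y) - f(y j)` as a function of the whole sample `y`. -/
def auxF {m : ℕ} {α : Type*} (f : α → ℂ) (j : Fin m) (y : Fin m → α) : ℂ :=
  (m : ℂ)⁻¹ * ∑ j' : Fin m, f (y j') - f (y j)

theorem auxF_measurable {m : ℕ} {α : Type*} [MeasurableSpace α] {f : α → ℂ}
    (hf : Measurable f) (j : Fin m) : Measurable (auxF f j) :=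
  (measurable_const.mul (Finset.measurable_sum _ fun j' _ =>
    hf.comp (measurable_pi_apply j'))).sub (hf.comp (measurable_pi_apply j))

theorem auxF_norm_le {m : ℕ} {α : Type*} {f : α → ℂ} (hf : ∀ x, ‖f x‖ ≤ 1)
    (j : Fin m) (y : Fin m → α) : ‖auxF f j y‖ ≤ 2 := by
  have h1 : ‖(m : ℂ)⁻¹ * ∑ j' : Fin m, f (y j')‖ ≤ 1 := by
    rw [norm_mul]
    have h2 : ‖∑ j' : Fin m, f (y j')‖ ≤ m := by
      refine le_trans (norm_sum_le _ _) ?_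
      calc ∑ j' : Fin m, ‖f (y j')‖ ≤ ∑ _j' : Fin m, (1 : ℝ) :=
            Finset.sum_le_sum fun j' _ => hf (y j')
        _ = m := by simp
    have h3 : ‖((m : ℂ))⁻¹‖ = ((m : ℝ))⁻¹ := by
      rw [norm_inv, Complex.norm_natCast]
    rw [h3]
    rcases Nat.eq_zero_or_pos m with hm | hm
    · subst hm; simp
    · calc ((m:ℝ))⁻¹ * ‖∑ j' : Fin m, f (y j')‖ ≤ ((m:ℝ))⁻¹ * m := by
            exact mul_le_mul_of_nonneg_left h2 (by positivity)
        _ = 1 := by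
            field_simp
  calc ‖auxF f j y‖ ≤ ‖(m : ℂ)⁻¹ * ∑ j' : Fin m, f (y j')‖ + ‖f (y j)‖ := norm_sub_le _ _
    _ ≤ 1 + 1 := add_le_add h1 (hf _)
    _ = 2 := by norm_num

theorem auxF_integral_zero {m : ℕ} {α : Type*} [MeasurableSpace α] (ν : Measure α)
    [IsProbabilityMeasure ν] {f : α → ℂ} (hf : Measurable f) (hnf : ∀ x, ‖f x‖ ≤ 1)
    (j : Fin m) :
    ∫ y, auxF f j y ∂(Measure.pi fun _ : Fin m => ν) = 0 := by
  have hm : (m : ℂ) ≠ 0 := Nat.cast_ne_zero.2 j.pos.ne'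
  have hItg : ∀ r : Fin m, Integrable (fun y : Fin m → α => f (y r))
      (Measure.pi fun _ : Fin m => ν) := fun r =>
    aux_integrable (hf.comp (measurable_pi_apply r)).aestronglyMeasurable
      (C := 1) fun y => hnf (y r)
  simp only [auxF]
  rw [integral_sub ((integrable_finset_sum _ fun r _ => hItg r).const_mul _) (hItg j),
    integral_const_mul, integral_finset_sum _ fun r _ => hItg r]
  simp only [aux_integral_eval ν f]
  rw [Finset.sum_const, Finset.card_univ, Fintype.card_fin, nsmul_eq_mul, ← mul_assoc,
    inv_mul_cancel₀ hm, one_mul, sub_self]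

theorem aux_H {m : ℕ} {α : Type*} [MeasurableSpace α] (ν : Measure α) [IsProbabilityMeasure ν]
    (a b : α → ℂ) (ha : Measurable a) (hb : Measurable b)
    (hna : ∀ x, ‖a x‖ ≤ 1) (hnb : ∀ x, ‖b x‖ ≤ 1) (j k : Fin m) :
    ∫ y : Fin m → α, auxF a j y * (starRingEnd ℂ) (auxF b k y) ∂(Measure.pi fun _ => ν)
    = (if j = k then 1 - (m : ℂ)⁻¹ else -(m : ℂ)⁻¹) *
      ((∫ x, a x * (starRingEnd ℂ) (b x) ∂ν)
        - (∫ x, a x ∂ν) * (starRingEnd ℂ) (∫ x, b x ∂ν)) := by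
  have hm0 : 0 < m := j.pos
  have hm : (m : ℂ) ≠ 0 := Nat.cast_ne_zero.2 hm0.ne'
  set π : Measure (Fin m → α) := Measure.pi fun _ => ν with hπ
  have hmeas : ∀ r s : Fin m, Measurable fun y : Fin m → α => a (y r) * (starRingEnd ℂ) (b (y s)) :=
    fun r s => ((ha.comp (measurable_pi_apply r)).mul
      ((RCLike.continuous_conj.measurable).comp (hb.comp (measurable_pi_apply s))))
  have hItg : ∀ r s : Fin m, Integrable
      (fun y : Fin m → α => a (y r) * (starRingEnd ℂ) (b (y s))) π := by
    intro r s
    refine aux_integrable (hmeas r s).aestronglyMeasurable (C := 1) fun y => ?_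
    rw [norm_mul, RCLike.norm_conj]
    exact mul_le_one₀ (hna _) (norm_nonneg _) (hnb _)
  set c1 : ℂ := ∫ x, a x ∂ν
  set c2 : ℂ := (starRingEnd ℂ) (∫ x, b x ∂ν)
  set c12 : ℂ := ∫ x, a x * (starRingEnd ℂ) (b x) ∂ν
  set g : ℂ := c12 - c1 * c2
  have hc2 : ∫ x, (starRingEnd ℂ) (b x) ∂ν = c2 := integral_conj
  have hκ : ∀ r s : Fin m, ∫ y, a (y r) * (starRingEnd ℂ) (b (y s)) ∂π
      = c1 * c2 + if r = s then g else 0 := by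
    intro r s
    by_cases hrs : r = s
    · subst hrs
      rw [aux_integral_eval ν (fun x => a x * (starRingEnd ℂ) (b x)) r]
      simp [g, c12]
    · rw [aux_integral_eval_two ν a (fun x => (starRingEnd ℂ) (b x)) hrs, hc2]
      simp [hrs, c1]
  have hpt : ∀ y : Fin m → α,
      auxF a j y * (starRingEnd ℂ) (auxF b k y)
      = (m : ℂ)⁻¹ * (m : ℂ)⁻¹ * ∑ j' : Fin m, ∑ k' : Fin m,
          ((a (y j') * (starRingEnd ℂ) (b (y k')) - a (y j') * (starRingEnd ℂ) (b (y k)))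
            - (a (y j) * (starRingEnd ℂ) (b (y k')) - a (y j) * (starRingEnd ℂ) (b (y k)))) := by
    intro y
    simp only [auxF]
    have e1 : (m : ℂ)⁻¹ * ∑ j' : Fin m, a (y j') - a (y j)
        = (m : ℂ)⁻¹ * ∑ j' : Fin m, (a (y j') - a (y j)) := by
      rw [Finset.sum_sub_distrib, Finset.sum_const, Finset.card_univ, Fintype.card_fin,
        nsmul_eq_mul, mul_sub, ← mul_assoc, inv_mul_cancel₀ hm, one_mul]
    have e2 : (m : ℂ)⁻¹ * ∑ k' : Fin m, b (y k') - b (y k)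
        = (m : ℂ)⁻¹ * ∑ k' : Fin m, (b (y k') - b (y k)) := by
      rw [Finset.sum_sub_distrib, Finset.sum_const, Finset.card_univ, Fintype.card_fin,
        nsmul_eq_mul, mul_sub, ← mul_assoc, inv_mul_cancel₀ hm, one_mul]
    rw [e1, e2, map_mul, map_inv₀, map_natCast, map_sum]
    rw [Finset.mul_sum, Finset.mul_sum, Finset.sum_mul_sum]
    simp_rw [Finset.mul_sum]
    refine Finset.sum_congr rfl fun j' _ => Finset.sum_congr rfl fun k' _ => ?_
    rw [map_sub]
    ring
  rw [integral_congr_ae (ae_of_all _ hpt), integral_const_mul]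
  have hItg2 : ∀ (r s r' s' : Fin m), Integrable (fun y : Fin m → α =>
      ((a (y r) * (starRingEnd ℂ) (b (y s)) - a (y r) * (starRingEnd ℂ) (b (y s')))
        - (a (y r') * (starRingEnd ℂ) (b (y s)) - a (y r') * (starRingEnd ℂ) (b (y s'))))) π :=
    fun r s r' s' => (((hItg r s).sub (hItg r s')).sub ((hItg r' s).sub (hItg r' s')))
  rw [integral_finset_sum _ (fun j' _ => integrable_finset_sum _ (fun k' _ => hItg2 j' k' j k))]
  have hterm : ∀ j' k' : Fin m,
      ∫ y, ((a (y j') * (starRingEnd ℂ) (b (y k')) - a (y j') * (starRingEnd ℂ) (b (y k)))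
        - (a (y j) * (starRingEnd ℂ) (b (y k')) - a (y j) * (starRingEnd ℂ) (b (y k)))) ∂π
      = ((if j' = k' then g else 0) - (if j' = k then g else 0))
        - ((if j = k' then g else 0) - (if j = k then g else 0)) := by
    intro j' k'
    have I1 : Integrable (fun y : Fin m → α => a (y j') * (starRingEnd ℂ) (b (y k'))
        - a (y j') * (starRingEnd ℂ) (b (y k))) π := (hItg j' k').sub (hItg j' k)
    have I2 : Integrable (fun y : Fin m → α => a (y j) * (starRingEnd ℂ) (b (y k'))
        - a (y j) * (starRingEnd ℂ) (b (y k))) π := (hItg j k').sub (hItg j k)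
    rw [integral_sub I1 I2, integral_sub (hItg j' k') (hItg j' k),
      integral_sub (hItg j k') (hItg j k), hκ, hκ, hκ, hκ]
    ring
  simp_rw [integral_finset_sum _ (fun k' _ => hItg2 _ k' j k), hterm]
  simp only [Finset.sum_sub_distrib, Finset.sum_ite_eq, Finset.sum_ite_eq',
    Finset.mem_univ, if_true, Finset.sum_const, Finset.card_univ, Fintype.card_fin,
    nsmul_eq_mul, mul_ite, mul_zero, ↓reduceIte]
  by_cases hjk : j = k
  · subst hjk
    simp only [if_pos rfl, if_pos trivial]
    field_simp
    ring
  · simp only [if_neg hjk]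
    field_simp
    ring

def auxPhi {k : ℕ} (t y : EuclideanSpace ℝ (Fin k)) : ℂ :=
  Complex.exp (Complex.I * ((⟪t, y⟫ : ℝ) : ℂ))

theorem auxPhi_measurable {k : ℕ} (t : EuclideanSpace ℝ (Fin k)) : Measurable (auxPhi t) := by
  apply Complex.measurable_exp.comp
  exact (measurable_const.mul (Complex.measurable_ofReal.comp
    (continuous_const.inner continuous_id).measurable))

theorem auxPhi_norm {k : ℕ} (t y : EuclideanSpace ℝ (Fin k)) : ‖auxPhi t y‖ = 1 := by
  simp [auxPhi, Complex.norm_exp]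

theorem auxPhi_norm_le {k : ℕ} (t : EuclideanSpace ℝ (Fin k)) :
    ∀ y, ‖auxPhi t y‖ ≤ 1 := fun y => le_of_eq (auxPhi_norm t y)

theorem auxPhi_conj {k : ℕ} (t y : EuclideanSpace ℝ (Fin k)) :
    (starRingEnd ℂ) (auxPhi t y) = auxPhi (-t) y := by
  rw [auxPhi, auxPhi, ← Complex.exp_conj]
  congr 1
  simp [inner_neg_left]

theorem auxPhi_mul_conj {k : ℕ} (t s y : EuclideanSpace ℝ (Fin k)) :
    auxPhi t y * (starRingEnd ℂ) (auxPhi s y) = auxPhi (t - s) y := by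
  rw [auxPhi_conj, auxPhi, auxPhi, auxPhi, ← Complex.exp_add]
  congr 1
  rw [inner_sub_left, inner_neg_left]
  push_cast
  ring

theorem aux_map_pi {Ω : Type*} [MeasurableSpace Ω] (μ : Measure Ω) [IsProbabilityMeasure μ]
    {ι : Type*} [Fintype ι] {κ : ι → Type*} [∀ i, MeasurableSpace (κ i)]
    (Y : ∀ i, Ω → κ i) (hY : ∀ i, Measurable (Y i))
    (h : iIndepFun Y μ) :
    Measure.map (fun ω i => Y i ω) μ = Measure.pi (fun i => Measure.map (Y i) μ) := by
  refine (Measure.pi_eq fun s hs => ?_).symm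
  rw [Measure.map_apply (measurable_pi_lambda _ hY) (MeasurableSet.univ_pi hs)]
  have hpre : (fun ω i => Y i ω) ⁻¹' Set.pi Set.univ s = ⋂ i, Y i ⁻¹' s i := by
    ext ω; simp [Set.mem_pi]
  rw [hpre, h.meas_iInter fun i => ⟨s i, hs i, rfl⟩]
  exact Finset.prod_congr rfl fun i _ => (Measure.map_apply (hY i) (hs i)).symm

end AuxLemmas
/-- Mean zero and the covariance structure of the empirical process `Γ_n`
under mutual independence. -/
theorem stmt19 {Ω : Type*} [MeasurableSpace Ω] (μ : Measure Ω) [IsProbabilityMeasure μ]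
    {d n : ℕ} (hd : 2 ≤ d) (hn : 1 ≤ n) {p : Fin d → ℕ}
    (X : (i : Fin d) → Ω → EuclideanSpace ℝ (Fin (p i)))
    (hm : ∀ i, Measurable (X i))
    (hindep : iIndepFun X μ)
    (W : Fin n → Ω → (i : Fin d) → EuclideanSpace ℝ (Fin (p i)))
    (hmW : ∀ j, Measurable (W j))
    (hiid : iIndepFun W μ)
    (hidW : ∀ j, IdentDistrib (W j) (fun ω i => X i ω) μ μ)
    (t t₀ : (i : Fin d) → EuclideanSpace ℝ (Fin (p i))) :
    (∫ ω, Gamman W t ω ∂μ) = 0 ∧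
    (∫ ω, Gamman W t ω * (starRingEnd ℂ) (Gamman W t₀ ω) ∂μ)
      = (((((n : ℝ) - 1) / n) ^ d + ((n : ℝ) - 1) * (-(1 / (n : ℝ))) ^ d : ℝ) : ℂ) *
          ∏ i, (charFn μ (X i) (t i - t₀ i) - charFn μ (X i) (t i) * charFn μ (X i) (-(t₀ i))) := by
  have hn0 : (n : ℂ) ≠ 0 := Nat.cast_ne_zero.2 (by omega)
  set ν : ∀ i : Fin d, Measure (EuclideanSpace ℝ (Fin (p i))) := fun i => Measure.map (X i) μ
    with hνdef
  haveI hνP : ∀ i, IsProbabilityMeasure (ν i) := fun i =>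
    Measure.isProbabilityMeasure_map (hm i).aemeasurable
  have hXmap : Measure.map (fun ω i => X i ω) μ = Measure.pi ν := aux_map_pi μ X hm hindep
  have hWmap : Measure.map (fun ω j => W j ω) μ
      = Measure.pi (fun _ : Fin n => Measure.pi ν) := by
    rw [aux_map_pi μ W hmW hiid]
    congr 1
    funext j
    rw [← hXmap]
    exact (hidW j).map_eq
  have hchar : ∀ (i : Fin d) (s : EuclideanSpace ℝ (Fin (p i))),
      charFn μ (X i) s = ∫ y, auxPhi s y ∂ν i := by
    intro i s
    rw [show ν i = μ.map (X i) from congrFun hνdef i,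
      integral_map (hm i).aemeasurable (auxPhi_measurable s).aestronglyMeasurable]
    rfl
  have hcol : ∀ i : Fin d,
      Measurable (fun (x : Fin n → ∀ i', EuclideanSpace ℝ (Fin (p i'))) (j : Fin n) => x j i) :=
    fun i => measurable_pi_lambda _ fun j => (measurable_pi_apply i).comp (measurable_pi_apply j)
  have hWφ : AEMeasurable (fun ω (j : Fin n) => W j ω) μ :=
    (measurable_pi_lambda _ fun j => hmW j).aemeasurable
  have hFm : ∀ (s : ∀ i, EuclideanSpace ℝ (Fin (p i))) (i : Fin d) (j : Fin n),
      Measurable (fun x : Fin n → ∀ i', EuclideanSpace ℝ (Fin (p i')) =>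
        auxF (auxPhi (s i)) j (fun j' => x j' i)) :=
    fun s i j => (auxF_measurable (auxPhi_measurable (s i)) j).comp (hcol i)
  -- mean zero
  have hmean : ∫ ω, Gamman W t ω ∂μ = 0 := by
    have hPm : ∀ j : Fin n, Measurable (fun x : Fin n → ∀ i', EuclideanSpace ℝ (Fin (p i')) =>
        ∏ i, auxF (auxPhi (t i)) j (fun j' => x j' i)) :=
      fun j => Finset.measurable_prod _ fun i _ => hFm t i j
    have hGm : Measurable (fun x : Fin n → ∀ i', EuclideanSpace ℝ (Fin (p i')) =>
        (((Real.sqrt n : ℝ) : ℂ))⁻¹ * ∑ j : Fin n, ∏ i,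
          auxF (auxPhi (t i)) j (fun j' => x j' i)) :=
      measurable_const.mul (Finset.measurable_sum _ fun j _ => hPm j)
    have hint : ∫ ω, Gamman W t ω ∂μ
        = ∫ x, (((Real.sqrt n : ℝ) : ℂ))⁻¹ * ∑ j : Fin n, ∏ i,
            auxF (auxPhi (t i)) j (fun j' => x j' i)
            ∂(Measure.pi (fun _ : Fin n => Measure.pi ν)) := by
      rw [← hWmap, integral_map hWφ hGm.aestronglyMeasurable]
      rfl
    have hIntProd : ∀ j : Fin n, Integrable
        (fun x : Fin n → ∀ i', EuclideanSpace ℝ (Fin (p i')) =>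
          ∏ i, auxF (auxPhi (t i)) j (fun j' => x j' i))
        (Measure.pi (fun _ : Fin n => Measure.pi ν)) := by
      intro j
      refine aux_integrable (hPm j).aestronglyMeasurable (C := 2 ^ d) fun x => ?_
      rw [norm_prod]
      calc ∏ i, ‖auxF (auxPhi (t i)) j (fun j' => x j' i)‖ ≤ ∏ _i : Fin d, (2 : ℝ) :=
            Finset.prod_le_prod (fun i _ => norm_nonneg _)
              (fun i _ => auxF_norm_le (auxPhi_norm_le _) j _)
        _ = 2 ^ d := by simp
    rw [hint, integral_const_mul, integral_finset_sum _ fun j _ => hIntProd j]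
    have hzero : ∀ j : Fin n,
        ∫ x, ∏ i, auxF (auxPhi (t i)) j (fun j' => x j' i)
          ∂(Measure.pi (fun _ : Fin n => Measure.pi ν)) = 0 := by
      intro j
      rw [aux_integral_swap_prod ν (fun i => auxF (auxPhi (t i)) j)]
      refine Finset.prod_eq_zero (Finset.mem_univ (⟨0, by omega⟩ : Fin d)) ?_
      exact auxF_integral_zero (ν _) (auxPhi_measurable _) (auxPhi_norm_le _) j
    simp [hzero]
  refine ⟨hmean, ?_⟩
  -- covariance
  have hPm2 : ∀ j k : Fin n, Measurable (fun x : Fin n → ∀ i', EuclideanSpace ℝ (Fin (p i')) =>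
      ∏ i, auxF (auxPhi (t i)) j (fun j' => x j' i) *
        (starRingEnd ℂ) (auxF (auxPhi (t₀ i)) k (fun j' => x j' i))) :=
    fun j k => Finset.measurable_prod _ fun i _ => (hFm t i j).mul
      ((RCLike.continuous_conj.measurable).comp (hFm t₀ i k))
  have hGm2 : Measurable (fun x : Fin n → ∀ i', EuclideanSpace ℝ (Fin (p i')) =>
      ((((Real.sqrt n : ℝ) : ℂ))⁻¹ * ∑ j : Fin n, ∏ i,
          auxF (auxPhi (t i)) j (fun j' => x j' i)) *
        (starRingEnd ℂ) ((((Real.sqrt n : ℝ) : ℂ))⁻¹ * ∑ k : Fin n, ∏ i,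
          auxF (auxPhi (t₀ i)) k (fun j' => x j' i))) := by
    refine (measurable_const.mul (Finset.measurable_sum _ fun j _ =>
      Finset.measurable_prod _ fun i _ => hFm t i j)).mul
      ((RCLike.continuous_conj.measurable).comp
        (measurable_const.mul (Finset.measurable_sum _ fun k _ =>
          Finset.measurable_prod _ fun i _ => hFm t₀ i k)))
  have hint2 : ∫ ω, Gamman W t ω * (starRingEnd ℂ) (Gamman W t₀ ω) ∂μ
      = ∫ x, ((((Real.sqrt n : ℝ) : ℂ))⁻¹ * ∑ j : Fin n, ∏ i,
            auxF (auxPhi (t i)) j (fun j' => x j' i)) *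
          (starRingEnd ℂ) ((((Real.sqrt n : ℝ) : ℂ))⁻¹ * ∑ k : Fin n, ∏ i,
            auxF (auxPhi (t₀ i)) k (fun j' => x j' i))
          ∂(Measure.pi (fun _ : Fin n => Measure.pi ν)) := by
    rw [← hWmap, integral_map hWφ hGm2.aestronglyMeasurable]
    rfl
  have hsqrt : ((((Real.sqrt n : ℝ) : ℂ))⁻¹ : ℂ) * (((Real.sqrt n : ℝ) : ℂ))⁻¹
      = (n : ℂ)⁻¹ := by
    rw [← mul_inv, ← Complex.ofReal_mul, Real.mul_self_sqrt (Nat.cast_nonneg n),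
      Complex.ofReal_natCast]
  have hpt : ∀ x : Fin n → ∀ i', EuclideanSpace ℝ (Fin (p i')),
      ((((Real.sqrt n : ℝ) : ℂ))⁻¹ * ∑ j : Fin n, ∏ i,
          auxF (auxPhi (t i)) j (fun j' => x j' i)) *
        (starRingEnd ℂ) ((((Real.sqrt n : ℝ) : ℂ))⁻¹ * ∑ k : Fin n, ∏ i,
          auxF (auxPhi (t₀ i)) k (fun j' => x j' i))
      = (n : ℂ)⁻¹ * ∑ j : Fin n, ∑ k : Fin n, ∏ i,
          (auxF (auxPhi (t i)) j (fun j' => x j' i) *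
            (starRingEnd ℂ) (auxF (auxPhi (t₀ i)) k (fun j' => x j' i))) := by
    intro x
    rw [map_mul, map_inv₀, Complex.conj_ofReal, map_sum, mul_mul_mul_comm, hsqrt,
      Finset.sum_mul_sum]
    congr 1
    refine Finset.sum_congr rfl fun j _ => Finset.sum_congr rfl fun k _ => ?_
    rw [map_prod, ← Finset.prod_mul_distrib]
  have hIntProd2 : ∀ j k : Fin n, Integrable
      (fun x : Fin n → ∀ i', EuclideanSpace ℝ (Fin (p i')) =>
        ∏ i, auxF (auxPhi (t i)) j (fun j' => x j' i) *
          (starRingEnd ℂ) (auxF (auxPhi (t₀ i)) k (fun j' => x j' i)))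
      (Measure.pi (fun _ : Fin n => Measure.pi ν)) := by
    intro j k
    refine aux_integrable (hPm2 j k).aestronglyMeasurable (C := 4 ^ d) fun x => ?_
    rw [norm_prod]
    calc ∏ i, ‖auxF (auxPhi (t i)) j (fun j' => x j' i) *
          (starRingEnd ℂ) (auxF (auxPhi (t₀ i)) k (fun j' => x j' i))‖
        ≤ ∏ _i : Fin d, (4 : ℝ) := by
          refine Finset.prod_le_prod (fun i _ => norm_nonneg _) (fun i _ => ?_)
          rw [norm_mul, RCLike.norm_conj]
          calc ‖auxF (auxPhi (t i)) j (fun j' => x j' i)‖ *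
                ‖auxF (auxPhi (t₀ i)) k (fun j' => x j' i)‖ ≤ 2 * 2 :=
              mul_le_mul (auxF_norm_le (auxPhi_norm_le _) j _)
                (auxF_norm_le (auxPhi_norm_le _) k _) (norm_nonneg _) (by norm_num)
            _ = 4 := by norm_num
      _ = 4 ^ d := by simp
  have hjk : ∀ j k : Fin n,
      ∫ x, ∏ i, auxF (auxPhi (t i)) j (fun j' => x j' i) *
          (starRingEnd ℂ) (auxF (auxPhi (t₀ i)) k (fun j' => x j' i))
        ∂(Measure.pi (fun _ : Fin n => Measure.pi ν))
      = (if j = k then 1 - (n : ℂ)⁻¹ else -(n : ℂ)⁻¹) ^ d *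
          ∏ i, (charFn μ (X i) (t i - t₀ i)
            - charFn μ (X i) (t i) * charFn μ (X i) (-(t₀ i))) := by
    intro j k
    rw [aux_integral_swap_prod ν (fun i y => auxF (auxPhi (t i)) j y *
      (starRingEnd ℂ) (auxF (auxPhi (t₀ i)) k y))]
    have hone : ∀ i : Fin d,
        ∫ y, auxF (auxPhi (t i)) j y * (starRingEnd ℂ) (auxF (auxPhi (t₀ i)) k y)
          ∂(Measure.pi fun _ : Fin n => ν i)
        = (if j = k then 1 - (n : ℂ)⁻¹ else -(n : ℂ)⁻¹) *
          (charFn μ (X i) (t i - t₀ i)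
            - charFn μ (X i) (t i) * charFn μ (X i) (-(t₀ i))) := by
      intro i
      rw [aux_H (ν i) (auxPhi (t i)) (auxPhi (t₀ i)) (auxPhi_measurable _)
        (auxPhi_measurable _) (auxPhi_norm_le _) (auxPhi_norm_le _) j k]
      congr 1
      have e1 : ∫ x, auxPhi (t i) x * (starRingEnd ℂ) (auxPhi (t₀ i) x) ∂ν i
          = charFn μ (X i) (t i - t₀ i) := by
        rw [hchar]
        exact integral_congr_ae (ae_of_all _ fun y => auxPhi_mul_conj (t i) (t₀ i) y)
      have e2 : (∫ x, auxPhi (t i) x ∂ν i) = charFn μ (X i) (t i) := (hchar i (t i)).symm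
      have e3 : (starRingEnd ℂ) (∫ x, auxPhi (t₀ i) x ∂ν i) = charFn μ (X i) (-(t₀ i)) := by
        rw [← integral_conj, hchar]
        exact integral_congr_ae (ae_of_all _ fun y => auxPhi_conj (t₀ i) y)
      rw [e1, e2, e3]
    simp only [hone]
    rw [Finset.prod_mul_distrib, Finset.prod_const, Finset.card_univ, Fintype.card_fin]
  rw [hint2, integral_congr_ae (ae_of_all _ hpt), integral_const_mul,
    integral_finset_sum _ fun j _ => integrable_finset_sum _ fun k _ => hIntProd2 j k]
  simp_rw [integral_finset_sum _ fun k _ => hIntProd2 _ k, hjk]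
  set P : ℂ := ∏ i, (charFn μ (X i) (t i - t₀ i)
    - charFn μ (X i) (t i) * charFn μ (X i) (-(t₀ i))) with hPdef
  set u : ℂ := (1 - (n : ℂ)⁻¹) ^ d * P with hudef
  set v : ℂ := (-(n : ℂ)⁻¹) ^ d * P with hvdef
  have hite : ∀ j k : Fin n,
      (if j = k then 1 - (n : ℂ)⁻¹ else -(n : ℂ)⁻¹) ^ d * P = if j = k then u else v := by
    intro j k; split_ifs <;> rfl
  simp_rw [hite]
  have hsum : ∀ j : Fin n, (∑ k : Fin n, if j = k then u else v) = u + ((n : ℂ) - 1) * v := by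
    intro j
    have h1 : ∀ k : Fin n, (if j = k then u else v) = v + (if j = k then u - v else 0) := by
      intro k; split_ifs <;> ring
    simp only [h1, Finset.sum_add_distrib, Finset.sum_const, Finset.card_univ,
      Fintype.card_fin, Finset.sum_ite_eq, Finset.mem_univ, if_true, nsmul_eq_mul]
    ring
  simp_rw [hsum]
  rw [Finset.sum_const, Finset.card_univ, Fintype.card_fin, nsmul_eq_mul, ← mul_assoc,
    inv_mul_cancel₀ hn0, one_mul]
  rw [hudef, hvdef]
  have hb1 : (1 : ℂ) - (n : ℂ)⁻¹ = ((n : ℂ) - 1) / n := by field_simp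
  have hb2 : (-(n : ℂ)⁻¹ : ℂ) = -(1 / (n : ℂ)) := by rw [inv_eq_one_div]
  rw [hb1, hb2]
  push_cast
  ring
end
end
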